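/- arXiv:2106.06037 — 4 statements merged into one kernel-verified Lean document; each statement's English description precedes it below -/
import Mathlib

section
/- Let M be any non-crossing matching of strings X and Y, and let num(X^M), num(Y^M) be obtained by masking the matched characters with dummies and enumerating the dummies. Then ed(X,Y) ≤ ed(num(X^M), num(Y^M)). -/
open Classical

universe u

variable {α : Type u}

/-- The `x`-th character (1-indexed) of a string, as an `Option`. -/
def chr (X : List α) (x : ℕ) : Option α := X[x - 1]?

/-- `A` is an alignment of `X` and `Y`: a monotone lattice path from `(1,1)` to
`(|X|+1, |Y|+1)` with steps `(+1,+1)`, `(+1,0)`, `(0,+1)`. -/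
def IsAlignment (X Y : List α) (A : List (ℕ × ℕ)) : Prop :=
  A ≠ [] ∧ A.head? = some (1, 1) ∧ A.getLast? = some (X.length + 1, Y.length + 1) ∧
  A.Chain' (fun p q => q = (p.1 + 1, p.2 + 1) ∨ q = (p.1 + 1, p.2) ∨ q = (p.1, p.2 + 1))

/-- The cost of one step of an alignment: a diagonal step on equal characters is free,
every other step (a deletion or a substitution) costs one. -/
noncomputable def stepCost (X Y : List α) (p q : ℕ × ℕ) : ℕ :=
  if q = (p.1 + 1, p.2 + 1) ∧ chr X p.1 = chr Y p.2 then 0 else 1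

/-- The cost of an alignment: the number of deleted or substituted characters. -/
noncomputable def alignCost (X Y : List α) (A : List (ℕ × ℕ)) : ℕ :=
  ((A.zip A.tail).map (fun pq => stepCost X Y pq.1 pq.2)).sum

/-- The set of matches of an alignment `A`: elements `(x,y)` followed by a diagonal step
with `X[x] = Y[y]`. -/
def Matches (X Y : List α) (A : List (ℕ × ℕ)) : Set (ℕ × ℕ) :=
  {p | ∃ t, A[t]? = some p ∧ A[t + 1]? = some (p.1 + 1, p.2 + 1) ∧
       p.1 ≤ X.length ∧ p.2 ≤ Y.length ∧ chr X p.1 = chr Y p.2}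

/-- The breakpoints of an alignment: its elements that are not matches. -/
def Breakpoints (X Y : List α) (A : List (ℕ × ℕ)) : Set (ℕ × ℕ) :=
  {p | p ∈ A ∧ p ∉ Matches X Y A}

/-- An alignment is greedy if at every breakpoint `(x,y)` with `x ≤ |X|`, `y ≤ |Y|`,
the characters `X[x]` and `Y[y]` differ. -/
def IsGreedy (X Y : List α) (A : List (ℕ × ℕ)) : Prop :=
  ∀ p ∈ Breakpoints X Y A, p.1 ≤ X.length → p.2 ≤ Y.length → chr X p.1 ≠ chr Y p.2

/-- The edit distance: the minimum cost of an alignment of `X` and `Y`. -/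
noncomputable def ed (X Y : List α) : ℕ :=
  sInf (alignCost X Y '' {A | IsAlignment X Y A})

/-- `GA k X Y`: the set of greedy alignments of `X, Y` of cost at most `k`. -/
def GA (k : ℕ) (X Y : List α) : Set (List (ℕ × ℕ)) :=
  {A | IsAlignment X Y A ∧ IsGreedy X Y A ∧ alignCost X Y A ≤ k}

/-- `commonMatches k X Y` (the set `M_k(X,Y)`): the matches common to all greedy
alignments of cost at most `k`. -/
def commonMatches (k : ℕ) (X Y : List α) : Set (ℕ × ℕ) :=
  ⋂ A ∈ GA k X Y, Matches X Y A

/-- `M` is a non-crossing matching of `X, Y`: all pairs `(x,y) ∈ M` are in range,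
have `X[x] = Y[y]`, and no two distinct pairs `(x,y), (x',y')` satisfy `x ≤ x'` and
`y ≥ y'`. -/
def IsNonCrossingMatching (X Y : List α) (M : Set (ℕ × ℕ)) : Prop :=
  (∀ p ∈ M, 1 ≤ p.1 ∧ p.1 ≤ X.length ∧ 1 ≤ p.2 ∧ p.2 ≤ Y.length ∧ chr X p.1 = chr Y p.2) ∧
  ∀ p ∈ M, ∀ q ∈ M, p ≠ q → p.1 ≤ q.1 → p.2 < q.2

/-- Mask the positions in `S` (1-indexed) of `X` with enumerated dummy symbols:
this realizes `num(X^M)`. -/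
noncomputable def numMask (X : List α) (S : Set ℕ) : List (α ⊕ ℕ) :=
  X.mapIdx (fun i a =>
    if (i + 1) ∈ S then Sum.inr ((Finset.range i).filter (fun j => (j + 1) ∈ S)).card
    else Sum.inl a)

section Aux

variable {X Y : List α} {M : Set (ℕ × ℕ)}

lemma numMask_length (X : List α) (S : Set ℕ) : (numMask X S).length = X.length := by
  simp [numMask]

lemma partner_unique_fst (hM : IsNonCrossingMatching X Y M) {x y y' : ℕ}
    (h : (x, y) ∈ M) (h' : (x, y') ∈ M) : y = y' := by
  by_contra hne
  have h1 := hM.2 _ h _ h' (by simp [Prod.ext_iff, hne]) le_rfl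
  have h2 := hM.2 _ h' _ h (by simp [Prod.ext_iff, Ne.symm hne]) le_rfl
  simp at h1 h2; omega

lemma partner_unique_snd (hM : IsNonCrossingMatching X Y M) {x x' y : ℕ}
    (h : (x, y) ∈ M) (h' : (x', y) ∈ M) : x = x' := by
  by_contra hne
  rcases le_total x x' with hle | hle
  · have := hM.2 _ h _ h' (by simp [Prod.ext_iff, hne]) hle
    simp at this
  · have := hM.2 _ h' _ h (by simp [Prod.ext_iff, Ne.symm hne]) hle
    simp at this

lemma mono_fst (hM : IsNonCrossingMatching X Y M) {x y x' y' : ℕ}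
    (h : (x, y) ∈ M) (h' : (x', y') ∈ M) (hlt : x < x') : y < y' := by
  have := hM.2 _ h _ h' (by simp [Prod.ext_iff]; omega) (le_of_lt hlt)
  simpa using this

lemma mono_snd (hM : IsNonCrossingMatching X Y M) {x y x' y' : ℕ}
    (h : (x, y) ∈ M) (h' : (x', y') ∈ M) (hlt : y < y') : x < x' := by
  by_contra hle
  push_neg at hle
  rcases eq_or_lt_of_le hle with heq | hlt'
  · subst heq
    have := partner_unique_fst hM h' h
    omega
  · have := mono_fst hM h' h hlt'
    omega

/-- The number of matched positions strictly before a matched pair is the same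
on both sides. -/
lemma rank_eq (hM : IsNonCrossingMatching X Y M) {x y : ℕ} (hxy : (x, y) ∈ M) :
    ((Finset.range (x - 1)).filter (fun j => (j + 1) ∈ {x | ∃ y, (x, y) ∈ M})).card
      = ((Finset.range (y - 1)).filter (fun j => (j + 1) ∈ {y | ∃ x, (x, y) ∈ M})).card := by
  have hx1 : 1 ≤ x := (hM.1 _ hxy).1
  have hy1 : 1 ≤ y := (hM.1 _ hxy).2.2.1
  apply Finset.card_bij
    (fun j hj => Classical.choose ((Finset.mem_filter.mp hj).2 : ∃ y', (j + 1, y') ∈ M) - 1)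
  · intro j hj
    obtain ⟨hjr, hjS⟩ := Finset.mem_filter.mp hj
    have hjr' : j < x - 1 := Finset.mem_range.mp hjr
    set yj := Classical.choose (hjS : ∃ y', (j + 1, y') ∈ M) with hyjdef
    have hyj : (j + 1, yj) ∈ M := Classical.choose_spec (hjS : ∃ y', (j + 1, y') ∈ M)
    have hyj1 : 1 ≤ yj := (hM.1 _ hyj).2.2.1
    have : yj < y := mono_fst hM hyj hxy (by omega)
    refine Finset.mem_filter.mpr ⟨Finset.mem_range.mpr (by omega), ?_⟩
    have : yj - 1 + 1 = yj := by omega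
    rw [this]
    exact ⟨j + 1, hyj⟩
  · intro j1 hj1 j2 hj2 heq
    obtain ⟨_, hjS1⟩ := Finset.mem_filter.mp hj1
    obtain ⟨_, hjS2⟩ := Finset.mem_filter.mp hj2
    have hm1 : (j1 + 1, Classical.choose (hjS1 : ∃ y', (j1 + 1, y') ∈ M)) ∈ M :=
      Classical.choose_spec (hjS1 : ∃ y', (j1 + 1, y') ∈ M)
    have hm2 : (j2 + 1, Classical.choose (hjS2 : ∃ y', (j2 + 1, y') ∈ M)) ∈ M :=
      Classical.choose_spec (hjS2 : ∃ y', (j2 + 1, y') ∈ M)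
    have h1 : 1 ≤ Classical.choose (hjS1 : ∃ y', (j1 + 1, y') ∈ M) := (hM.1 _ hm1).2.2.1
    have h2 : 1 ≤ Classical.choose (hjS2 : ∃ y', (j2 + 1, y') ∈ M) := (hM.1 _ hm2).2.2.1
    have heq' : Classical.choose (hjS1 : ∃ y', (j1 + 1, y') ∈ M)
        = Classical.choose (hjS2 : ∃ y', (j2 + 1, y') ∈ M) := by omega
    rw [heq'] at hm1
    have := partner_unique_snd hM hm1 hm2
    omega
  · intro k hk
    obtain ⟨hkr, hkS⟩ := Finset.mem_filter.mp hk
    have hkr' : k < y - 1 := Finset.mem_range.mp hkr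
    obtain ⟨x', hx'⟩ := (hkS : ∃ x', (x', k + 1) ∈ M)
    have hx'1 : 1 ≤ x' := (hM.1 _ hx').1
    have hx'lt : x' < x := mono_snd hM hx' hxy (by omega)
    have hmem : x' - 1 ∈ (Finset.range (x - 1)).filter
        (fun j => (j + 1) ∈ {x | ∃ y, (x, y) ∈ M}) := by
      refine Finset.mem_filter.mpr ⟨Finset.mem_range.mpr (by omega), ?_⟩
      have : x' - 1 + 1 = x' := by omega
      rw [this]
      exact ⟨k + 1, hx'⟩
    refine ⟨x' - 1, hmem, ?_⟩
    have hm : (x' - 1 + 1,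
        Classical.choose ((Finset.mem_filter.mp hmem).2 : ∃ y', (x' - 1 + 1, y') ∈ M)) ∈ M :=
      Classical.choose_spec ((Finset.mem_filter.mp hmem).2 : ∃ y', (x' - 1 + 1, y') ∈ M)
    have hk1 : Classical.choose ((Finset.mem_filter.mp hmem).2 : ∃ y', (x' - 1 + 1, y') ∈ M)
        = k + 1 := by
      apply partner_unique_fst hM hm
      have hx'' : x' - 1 + 1 = x' := by omega
      rw [hx'']; exact hx'
    omega

/-- The rank function is strictly monotone on matched positions of `Y`. -/
lemma rank_strictMono (hM : IsNonCrossingMatching X Y M) {a b : ℕ}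
    (ha : a ∈ {y | ∃ x, (x, y) ∈ M}) (hab : a < b) :
    ((Finset.range (a - 1)).filter (fun j => (j + 1) ∈ {y | ∃ x, (x, y) ∈ M})).card
      < ((Finset.range (b - 1)).filter (fun j => (j + 1) ∈ {y | ∃ x, (x, y) ∈ M})).card := by
  obtain ⟨xa, hxa⟩ := ha
  have ha1 : 1 ≤ a := (hM.1 _ hxa).2.2.1
  apply Finset.card_lt_card
  constructor
  · apply Finset.filter_subset_filter
    exact Finset.range_subset_range.mpr (by omega)
  · intro hsub
    have hmem : a - 1 ∈ (Finset.range (b - 1)).filter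
        (fun j => (j + 1) ∈ {y | ∃ x, (x, y) ∈ M}) := by
      refine Finset.mem_filter.mpr ⟨Finset.mem_range.mpr (by omega), ?_⟩
      have : a - 1 + 1 = a := by omega
      rw [this]; exact ⟨xa, hxa⟩
    have := Finset.mem_filter.mp (hsub hmem)
    have := Finset.mem_range.mp this.1
    omega

/-- Equal ranks of matched positions force them to be matched to each other. -/
lemma match_of_rank (hM : IsNonCrossingMatching X Y M) {x y : ℕ}
    (hx : x ∈ {x | ∃ y, (x, y) ∈ M}) (hy : y ∈ {y | ∃ x, (x, y) ∈ M})
    (h : ((Finset.range (x - 1)).filter (fun j => (j + 1) ∈ {x | ∃ y, (x, y) ∈ M})).card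
      = ((Finset.range (y - 1)).filter (fun j => (j + 1) ∈ {y | ∃ x, (x, y) ∈ M})).card) :
    (x, y) ∈ M := by
  obtain ⟨y₀, hy₀⟩ := hx
  have h0 := rank_eq hM hy₀
  have hy₀S : y₀ ∈ {y | ∃ x, (x, y) ∈ M} := ⟨x, hy₀⟩
  have hyy : y = y₀ := by
    by_contra hne
    rcases lt_or_gt_of_ne hne with hlt | hlt
    · have := rank_strictMono hM hy hlt
      omega
    · have := rank_strictMono hM hy₀S hlt
      omega
  rw [hyy]; exact hy₀

/-- Characters equal after masking implies characters equal before masking. -/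
lemma chr_of_chr_numMask (hM : IsNonCrossingMatching X Y M) (i j : ℕ)
    (h : chr (numMask X {x | ∃ y, (x, y) ∈ M}) i = chr (numMask Y {y | ∃ x, (x, y) ∈ M}) j) :
    chr X i = chr Y j := by
  set Sx := {x | ∃ y, (x, y) ∈ M} with hSx
  set Sy := {y | ∃ x, (x, y) ∈ M} with hSy
  unfold chr at h ⊢
  unfold numMask at h
  rw [List.getElem?_mapIdx, List.getElem?_mapIdx] at h
  rcases hX : X[i - 1]? with _ | a
  · rw [hX] at h; simp at h
    rcases hY : Y[j - 1]? with _ | b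
    · rfl
    · rw [List.getElem?_eq_none h] at hY; simp at hY
  · rw [hX] at h; simp at h
    rcases hY : Y[j - 1]? with _ | b
    · rw [hY] at h; simp at h
    · rw [hY] at h; simp at h
      by_cases hiS : (i - 1 + 1) ∈ Sx <;> by_cases hjS : (j - 1 + 1) ∈ Sy <;>
        simp [hiS, hjS] at h
      · -- both masked: ranks equal, so matched to each other
        have hm : (i - 1 + 1, j - 1 + 1) ∈ M := by
          apply match_of_rank hM hiS hjS
          simpa [hSx, hSy] using h.symm
        have := (hM.1 _ hm).2.2.2.2
        unfold chr at this
        simp only [Nat.add_sub_cancel] at this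
        rw [hX, hY] at this
        exact this
      · -- neither masked: characters literally equal
        rw [h]

end Aux

/-- For any non-crossing matching `M` of `X` and `Y`,
`ed(X,Y) ≤ ed(num(X^M), num(Y^M))`. -/
theorem ed_le_ed_numMask (X Y : List α) (M : Set (ℕ × ℕ))
    (hM : IsNonCrossingMatching X Y M) :
    ed X Y ≤ ed (numMask X {x | ∃ y, (x, y) ∈ M}) (numMask Y {y | ∃ x, (x, y) ∈ M}) := by
  set X' := numMask X {x | ∃ y, (x, y) ∈ M} with hX'
  set Y' := numMask Y {y | ∃ x, (x, y) ∈ M} with hY'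
  have hlenX : X'.length = X.length := numMask_length X _
  have hlenY : Y'.length = Y.length := numMask_length Y _
  have halign : ∀ A : List (ℕ × ℕ), IsAlignment X' Y' A ↔ IsAlignment X Y A := by
    intro A
    unfold IsAlignment
    rw [hlenX, hlenY]
  have hcost : ∀ A : List (ℕ × ℕ), alignCost X Y A ≤ alignCost X' Y' A := by
    intro A
    unfold alignCost
    apply List.sum_le_sum
    intro pq _
    unfold stepCost
    by_cases hp : pq.2 = (pq.1.1 + 1, pq.1.2 + 1) ∧ chr X' pq.1.1 = chr Y' pq.1.2
    · have hq : pq.2 = (pq.1.1 + 1, pq.1.2 + 1) ∧ chr X pq.1.1 = chr Y pq.1.2 := by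
        refine ⟨hp.1, chr_of_chr_numMask hM _ _ ?_⟩
        rw [← hX', ← hY']; exact hp.2
      rw [if_pos hq, if_pos hp]
    · rw [if_neg hp]
      split_ifs <;> omega
  by_cases hne : {A : List (ℕ × ℕ) | IsAlignment X' Y' A}.Nonempty
  · unfold ed
    apply le_csInf (hne.image _)
    rintro b ⟨A, hA, rfl⟩
    calc sInf (alignCost X Y '' {A | IsAlignment X Y A})
        ≤ alignCost X Y A := Nat.sInf_le ⟨A, (halign A).mp hA, rfl⟩
      _ ≤ alignCost X' Y' A := hcost A
  · have h2 : {A : List (ℕ × ℕ) | IsAlignment X' Y' A} = ∅ :=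
      Set.not_nonempty_iff_eq_empty.mp hne
    have h1 : {A : List (ℕ × ℕ) | IsAlignment X Y A} = ∅ := by
      ext A
      simp only [Set.mem_setOf_eq, Set.mem_empty_iff_false, iff_false]
      intro hA
      have := (halign A).mpr hA
      rw [Set.eq_empty_iff_forall_notMem] at h2
      exact h2 A this
    unfold ed
    rw [h1, h2, Set.image_empty, Set.image_empty]
end

section
/- Consider strings X, Y, Z and k ≥ 0. Every greedy alignment A of X and Z with cost at most k is the product of some greedy alignment of X and Y with cost at most d and some greedy alignment of Y and Z with cost at most d, where d = 2·cost(A) + ed(X,Y) (in particular d ≤ 2k + ed(X,Y)). -/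
open Classical

universe u

variable {α : Type u}

/-- `AXZ` is a product of `AXY` and `AYZ` (with middle string of length `Ylen`): every
element `(x,z)` of `AXZ` factors through some `y ∈ [1..Ylen+1]` with `(x,y) ∈ AXY` and
`(y,z) ∈ AYZ`. -/
def IsProductOf (Ylen : ℕ) (AXZ AXY AYZ : List (ℕ × ℕ)) : Prop :=
  ∀ p ∈ AXZ, ∃ y, 1 ≤ y ∧ y ≤ Ylen + 1 ∧ (p.1, y) ∈ AXY ∧ (y, p.2) ∈ AYZ

----------------------------------------------------------------
-- SECTION 1 : basic path lemmas
----------------------------------------------------------------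

/-- the step relation -/
def GPstep (p q : ℕ × ℕ) : Prop :=
  q = (p.1 + 1, p.2 + 1) ∨ q = (p.1 + 1, p.2) ∨ q = (p.1, p.2 + 1)

lemma isAlignment_iff {X Y : List α} {A : List (ℕ × ℕ)} :
    IsAlignment X Y A ↔ A ≠ [] ∧ A.head? = some (1, 1) ∧
      A.getLast? = some (X.length + 1, Y.length + 1) ∧ A.Chain' GPstep := Iff.rfl

/-- componentwise order, strictly increasing in the sum -/
def GPle (p q : ℕ × ℕ) : Prop := p.1 ≤ q.1 ∧ p.2 ≤ q.2 ∧ p.1 + p.2 < q.1 + q.2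

instance : IsTrans (ℕ × ℕ) GPle := ⟨fun _ _ _ h h' => ⟨h.1.trans h'.1, h.2.1.trans h'.2.1, h.2.2.trans h'.2.2⟩⟩

lemma pairwise_of_alignment {X Y : List α} {A : List (ℕ × ℕ)}
    (hA : IsAlignment X Y A) : A.Pairwise GPle := by
  rw [← List.isChain_iff_pairwise]
  exact List.IsChain.imp (fun {p q} h => by
    rcases h with h|h|h <;> subst h <;> (simp [GPle]; try omega)) hA.2.2.2

lemma alignment_cons {X Y : List α} {A : List (ℕ × ℕ)} (hA : IsAlignment X Y A) :
    ∃ T, A = (1,1) :: T := by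
  rcases A with _ | ⟨h, T⟩
  · exact absurd rfl hA.1
  · have := hA.2.1
    simp only [List.head?_cons, Option.some_inj] at this
    exact ⟨T, by rw [this]⟩

lemma points_ge {X Y : List α} {A : List (ℕ × ℕ)} (hA : IsAlignment X Y A)
    {p : ℕ × ℕ} (hp : p ∈ A) : 1 ≤ p.1 ∧ 1 ≤ p.2 := by
  obtain ⟨T, rfl⟩ := alignment_cons hA
  have hpw := pairwise_of_alignment hA
  rcases List.mem_cons.1 hp with rfl | hp
  · exact ⟨le_refl 1, le_refl 1⟩
  · have := (List.pairwise_cons.1 hpw).1 p hp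
    exact ⟨this.1, this.2.1⟩

lemma points_le {X Y : List α} {A : List (ℕ × ℕ)} (hA : IsAlignment X Y A)
    {p : ℕ × ℕ} (hp : p ∈ A) : p.1 ≤ X.length + 1 ∧ p.2 ≤ Y.length + 1 := by
  have hpw := pairwise_of_alignment hA
  have hne : A ≠ [] := hA.1
  have hlast : A.getLast hne = (X.length + 1, Y.length + 1) := by
    have := hA.2.2.1
    rwa [List.getLast?_eq_getLast hne, Option.some_inj] at this
  have hconcat : A.dropLast ++ [A.getLast hne] = A := List.dropLast_append_getLast hne
  rw [← hconcat] at hpw hp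
  rcases List.mem_append.1 hp with hp | hp
  · have := (List.pairwise_append.1 hpw).2.2 p hp (A.getLast hne) (by simp)
    rw [hlast] at this
    exact ⟨this.1, this.2.1⟩
  · simp at hp
    rw [hp, hlast]
    exact ⟨le_refl _, le_refl _⟩

lemma get?_one_one {X Y : List α} {A : List (ℕ × ℕ)} (hA : IsAlignment X Y A)
    {t : ℕ} (ht : A[t]? = some (1,1)) : t = 0 := by
  obtain ⟨T, rfl⟩ := alignment_cons hA
  cases t with
  | zero => rfl
  | succ s =>
    exfalso
    have hmem : ((1,1) : ℕ × ℕ) ∈ T := List.mem_of_getElem? (by simpa using ht)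
    have := (List.pairwise_cons.1 (pairwise_of_alignment hA)).1 _ hmem
    exact absurd this.2.2 (by simp)

lemma alignCost_cons₂ (X Y : List α) (p q : ℕ × ℕ) (r : List (ℕ × ℕ)) :
    alignCost X Y (p :: q :: r) = stepCost X Y p q + alignCost X Y (q :: r) := by
  simp [alignCost]

lemma alignCost_singleton (X Y : List α) (p : ℕ × ℕ) : alignCost X Y [p] = 0 := by
  simp [alignCost]

lemma stepCost_le_one (X Y : List α) (p q : ℕ × ℕ) : stepCost X Y p q ≤ 1 := by
  unfold stepCost; split <;> omega

lemma alignCost_le (X Y : List α) (A : List (ℕ × ℕ)) :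
    alignCost X Y A ≤ A.length - 1 := by
  have h : ∀ L : List ℕ, (∀ x ∈ L, x ≤ 1) → L.sum ≤ L.length := by
    intro L
    induction L with
    | nil => simp
    | cons a l ih => intro h; simp only [List.sum_cons, List.length_cons]
                     have := ih (fun x hx => h x (List.mem_cons_of_mem _ hx))
                     have := h a (List.mem_cons_self)
                     omega
  calc alignCost X Y A ≤ ((A.zip A.tail).map (fun pq => stepCost X Y pq.1 pq.2)).length := by
        apply h
        intro x hx
        simp only [List.mem_map] at hx
        obtain ⟨pq, _, rfl⟩ := hx
        exact stepCost_le_one _ _ _ _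
    _ = A.length - 1 := by
        rcases A with _ | ⟨a, T⟩
        · simp
        · simp [List.length_zip]

----------------------------------------------------------------
-- SECTION 2 : chr and shift machinery
----------------------------------------------------------------

lemma chr_drop (X : List α) (d i : ℕ) (hi : 1 ≤ i) :
    chr (X.drop d) i = chr X (i + d) := by
  unfold chr
  rw [List.getElem?_drop]
  congr 1
  omega

lemma chr_none (X : List α) {x : ℕ} (h : X.length < x) : chr X x = none :=
  List.getElem?_eq_none_iff.2 (by omega)

lemma chr_some (X : List α) {x : ℕ} (h1 : 1 ≤ x) (h2 : x ≤ X.length) :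
    ∃ a, chr X x = some a := by
  unfold chr
  exact ⟨_, List.getElem?_eq_getElem (by omega)⟩

/-- shift all points of a list -/
def shf (δ : ℕ × ℕ) (L : List (ℕ × ℕ)) : List (ℕ × ℕ) :=
  L.map (fun p => (p.1 + δ.1, p.2 + δ.2))

lemma stepCost_shf (X Y : List α) (δ p q : ℕ × ℕ) (hp1 : 1 ≤ p.1) (hp2 : 1 ≤ p.2) :
    stepCost X Y (p.1 + δ.1, p.2 + δ.2) (q.1 + δ.1, q.2 + δ.2)
      = stepCost (X.drop δ.1) (Y.drop δ.2) p q := by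
  unfold stepCost
  have h1 : (((q.1 + δ.1, q.2 + δ.2) : ℕ × ℕ) = (p.1 + δ.1 + 1, p.2 + δ.2 + 1))
      ↔ (q = (p.1 + 1, p.2 + 1)) := by
    simp [Prod.ext_iff]; omega
  have h2 : (chr X (p.1 + δ.1) = chr Y (p.2 + δ.2))
      ↔ (chr (X.drop δ.1) p.1 = chr (Y.drop δ.2) p.2) := by
    rw [chr_drop _ _ _ hp1, chr_drop _ _ _ hp2]
  exact if_congr (and_congr h1 h2) rfl rfl

lemma alignCost_shf (X Y : List α) (δ : ℕ × ℕ) :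
    ∀ L : List (ℕ × ℕ), (∀ p ∈ L, 1 ≤ p.1 ∧ 1 ≤ p.2) →
      alignCost X Y (shf δ L) = alignCost (X.drop δ.1) (Y.drop δ.2) L := by
  intro L
  induction L with
  | nil => intro _; simp [alignCost, shf]
  | cons p t ih =>
    cases t with
    | nil => intro _; simp [alignCost, shf]
    | cons q r =>
      intro h
      have hp := h p (List.mem_cons_self)
      have ih' := ih (fun x hx => h x (List.mem_cons_of_mem _ hx))
      simp only [shf, List.map_cons] at ih' ⊢
      rw [alignCost_cons₂, alignCost_cons₂, ih',
        stepCost_shf X Y δ p q hp.1 hp.2]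

lemma shf_cons_of_alignment {X' Y' : List α} {C : List (ℕ × ℕ)} (δ : ℕ × ℕ)
    (hC : IsAlignment X' Y' C) :
    ∃ T, C = (1,1) :: T ∧ shf δ C = (1 + δ.1, 1 + δ.2) :: shf δ T := by
  obtain ⟨T, rfl⟩ := alignment_cons hC
  exact ⟨T, rfl, by simp [shf, Nat.add_comm]⟩

lemma matches_prepend_iff (X Y : List α) (δ : ℕ × ℕ) (C : List (ℕ × ℕ))
    (hδ : ¬(δ.1 = 0 ∧ δ.2 = 0)) (hd1 : δ.1 ≤ X.length) (hd2 : δ.2 ≤ Y.length)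
    (hC : IsAlignment (X.drop δ.1) (Y.drop δ.2) C)
    {p : ℕ × ℕ} (hp1 : 1 ≤ p.1) (hp2 : 1 ≤ p.2) :
    ((p.1 + δ.1, p.2 + δ.2) ∈ Matches X Y ((1,1) :: shf δ C))
      ↔ p ∈ Matches (X.drop δ.1) (Y.drop δ.2) C := by
  have hlen : (X.drop δ.1).length = X.length - δ.1 := List.length_drop
  have hlen2 : (Y.drop δ.2).length = Y.length - δ.2 := List.length_drop
  constructor
  · rintro ⟨t, h1, h2, h3, h4, h5⟩
    cases t with
    | zero =>
      exfalso
      simp only [List.getElem?_cons_zero, Option.some_inj, Prod.ext_iff] at h1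
      exact hδ ⟨by omega, by omega⟩
    | succ s =>
      simp only [List.getElem?_cons_succ] at h1 h2
      rw [shf, List.getElem?_map] at h1 h2
      obtain ⟨r, hr, hfr⟩ := Option.map_eq_some_iff.1 h1
      obtain ⟨r', hr', hfr'⟩ := Option.map_eq_some_iff.1 h2
      have hrp : r = p := by
        cases r; simp only [Prod.ext_iff] at hfr ⊢; constructor <;> omega
      have hrp' : r' = (p.1 + 1, p.2 + 1) := by
        cases r'; simp only [Prod.ext_iff] at hfr' ⊢; constructor <;> omega
      subst hrp; subst hrp'
      refine ⟨s, hr, hr', by omega, by omega, ?_⟩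
      rw [chr_drop _ _ _ hp1, chr_drop _ _ _ hp2]
      exact h5
  · rintro ⟨t, h1, h2, h3, h4, h5⟩
    refine ⟨t + 1, ?_, ?_, by omega, by omega, ?_⟩
    · simp only [List.getElem?_cons_succ]
      rw [shf, List.getElem?_map, h1]
      rfl

    · simp only [List.getElem?_cons_succ]
      rw [shf, List.getElem?_map, h2]
      simp only [Option.map_some]
      congr 1
      simp only [Prod.ext_iff]
      constructor <;> omega
    · rw [chr_drop _ _ _ hp1, chr_drop _ _ _ hp2] at h5
      exact h5

lemma greedy_prepend (X Y : List α) (δ : ℕ × ℕ) (C : List (ℕ × ℕ))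
    (hδ : ¬(δ.1 = 0 ∧ δ.2 = 0)) (hd1 : δ.1 ≤ X.length) (hd2 : δ.2 ≤ Y.length)
    (hC : IsAlignment (X.drop δ.1) (Y.drop δ.2) C)
    (hg : IsGreedy (X.drop δ.1) (Y.drop δ.2) C)
    (hhead : 1 ≤ X.length → 1 ≤ Y.length → chr X 1 = chr Y 1 → δ = (1,1)) :
    IsGreedy X Y ((1,1) :: shf δ C) := by
  intro p hp hx hy
  obtain ⟨T, hCT, hshfC⟩ := shf_cons_of_alignment δ hC
  rcases List.mem_cons.1 hp.1 with rfl | hmem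
  · -- head point
    intro hch
    have hδ11 := hhead (by simpa using hx) (by simpa using hy) hch
    apply hp.2
    refine ⟨0, by simp, ?_, by simpa using hx, by simpa using hy, hch⟩
    rw [List.getElem?_cons_succ, hshfC, List.getElem?_cons_zero, hδ11]
  · -- shifted point
    rw [shf] at hmem
    obtain ⟨r, hrC, rfl⟩ := List.mem_map.1 hmem
    have hr1 := points_ge hC hrC
    have hbrk : r ∈ Breakpoints (X.drop δ.1) (Y.drop δ.2) C := by
      refine ⟨hrC, fun hm => hp.2 ?_⟩
      exact (matches_prepend_iff X Y δ C hδ hd1 hd2 hC hr1.1 hr1.2).2 hm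
    have := hg r hbrk (by rw [List.length_drop]; omega) (by rw [List.length_drop]; omega)
    rw [chr_drop _ _ _ hr1.1, chr_drop _ _ _ hr1.2] at this
    exact this

lemma prepend_alignment (X Y : List α) (δ : ℕ × ℕ) (C : List (ℕ × ℕ))
    (hδv : δ = (1,1) ∨ δ = (1,0) ∨ δ = (0,1))
    (hd1 : δ.1 ≤ X.length) (hd2 : δ.2 ≤ Y.length)
    (hC : IsAlignment (X.drop δ.1) (Y.drop δ.2) C) :
    IsAlignment X Y ((1,1) :: shf δ C) ∧
      alignCost X Y ((1,1) :: shf δ C)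
        = stepCost X Y (1,1) (1 + δ.1, 1 + δ.2)
          + alignCost (X.drop δ.1) (Y.drop δ.2) C := by
  obtain ⟨T, hCT, hshfC⟩ := shf_cons_of_alignment δ hC
  have hlast : ((1,1) :: shf δ C).getLast? = some (X.length + 1, Y.length + 1) := by
    rw [hshfC, List.getLast?_cons_cons, ← hshfC, shf, List.getLast?_map, hC.2.2.1]
    simp only [Option.map_some, Option.some_inj, Prod.ext_iff]
    constructor <;> simp [List.length_drop] <;> omega
  have hchain : ((1,1) :: shf δ C).Chain' GPstep := by
    rw [hshfC, List.Chain', List.isChain_cons_cons, ← hshfC]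
    constructor
    · rcases hδv with rfl | rfl | rfl
      · exact Or.inl rfl
      · exact Or.inr (Or.inl rfl)
      · exact Or.inr (Or.inr rfl)
    · rw [shf, List.isChain_map]
      refine List.IsChain.imp ?_ hC.2.2.2
      intro a b hab
      rcases hab with h | h | h <;> rw [h] <;> simp [GPstep, Prod.ext_iff] <;> omega
  have hcost : alignCost X Y ((1,1) :: shf δ C)
      = stepCost X Y (1,1) (1 + δ.1, 1 + δ.2)
        + alignCost (X.drop δ.1) (Y.drop δ.2) C := by
    rw [hshfC, alignCost_cons₂, ← hshfC,
      alignCost_shf X Y δ C (fun p hp => points_ge hC hp)]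
  exact ⟨⟨by simp [hshfC], by simp [hshfC], hlast, hchain⟩, hcost⟩

----------------------------------------------------------------
-- SECTION 3 : peeling the first step of an alignment
----------------------------------------------------------------

lemma chain'_mono_mem {β : Type} {R S : β → β → Prop} :
    ∀ {l : List β}, l.Chain' R → (∀ a ∈ l, ∀ b ∈ l, R a b → S a b) → l.Chain' S := by
  intro l
  induction l with
  | nil => intro _ _; exact List.isChain_nil
  | cons a t ih =>
    intro h himp
    cases t with
    | nil => exact List.isChain_singleton _
    | cons b r =>
      rw [List.Chain', List.isChain_cons_cons] at h ⊢
      refine ⟨himp a (List.mem_cons_self) b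
        (List.mem_cons_of_mem _ (List.mem_cons_self)) h.1, ?_⟩
      exact ih h.2 (fun x hx y hy =>
        himp x (List.mem_cons_of_mem _ hx) y (List.mem_cons_of_mem _ hy))

lemma peel (X Z : List α) (A : List (ℕ × ℕ)) (q : ℕ × ℕ) (rest : List (ℕ × ℕ))
    (hA : IsAlignment X Z A) (heq : A = (1,1) :: q :: rest) :
    ∃ δ C, (δ = ((1,1) : ℕ × ℕ) ∨ δ = (1,0) ∨ δ = (0,1)) ∧
      δ.1 ≤ X.length ∧ δ.2 ≤ Z.length ∧
      q = (1 + δ.1, 1 + δ.2) ∧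
      IsAlignment (X.drop δ.1) (Z.drop δ.2) C ∧
      C.length = rest.length + 1 ∧
      alignCost X Z A = stepCost X Z (1,1) q + alignCost (X.drop δ.1) (Z.drop δ.2) C ∧
      (IsGreedy X Z A → IsGreedy (X.drop δ.1) (Z.drop δ.2) C) ∧
      (∀ p ∈ C, (p.1 + δ.1, p.2 + δ.2) ∈ A) ∧
      (∀ p ∈ q :: rest, ∃ r ∈ C, p = (r.1 + δ.1, r.2 + δ.2)) := by
  subst heq
  have hstep : GPstep (1,1) q := (List.isChain_cons_cons.1 hA.2.2.2).1
  have hδex : ∃ δ : ℕ × ℕ, (δ = ((1,1) : ℕ × ℕ) ∨ δ = (1,0) ∨ δ = (0,1)) ∧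
      q = (1 + δ.1, 1 + δ.2) := by
    rcases hstep with h | h | h
    · exact ⟨(1,1), Or.inl rfl, h⟩
    · exact ⟨(1,0), Or.inr (Or.inl rfl), h⟩
    · exact ⟨(0,1), Or.inr (Or.inr rfl), h⟩
  obtain ⟨δ, hδv, hq⟩ := hδex
  subst hq
  have hqle := points_le hA (List.mem_cons_of_mem _ (List.mem_cons_self))
  have hd1 : δ.1 ≤ X.length := by have := hqle.1; simp at this; omega
  have hd2 : δ.2 ≤ Z.length := by have := hqle.2; simp at this; omega
  have hδ0 : ¬(δ.1 = 0 ∧ δ.2 = 0) := by rcases hδv with rfl | rfl | rfl <;> simp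
  have hpw := pairwise_of_alignment hA
  have hpw2 : ((1 + δ.1, 1 + δ.2) :: rest).Pairwise GPle := (List.pairwise_cons.1 hpw).2
  have hge : ∀ p ∈ (1 + δ.1, 1 + δ.2) :: rest, 1 + δ.1 ≤ p.1 ∧ 1 + δ.2 ≤ p.2 := by
    intro p hp
    rcases List.mem_cons.1 hp with rfl | hp
    · exact ⟨le_refl _, le_refl _⟩
    · have := (List.pairwise_cons.1 hpw2).1 p hp
      exact ⟨this.1, this.2.1⟩
  set f : ℕ × ℕ → ℕ × ℕ := fun p => (p.1 - δ.1, p.2 - δ.2) with hf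
  set C : List (ℕ × ℕ) := ((1 + δ.1, 1 + δ.2) :: rest).map f with hCdef
  have hid : shf δ C = (1 + δ.1, 1 + δ.2) :: rest := by
    rw [hCdef, shf, List.map_map]
    have hptwise : ∀ p ∈ (1 + δ.1, 1 + δ.2) :: rest,
        (((fun p : ℕ × ℕ => (p.1 + δ.1, p.2 + δ.2)) ∘ f) p) = id p := by
      intro p hp
      have := hge p hp
      cases p
      simp only [hf, Function.comp_apply, id_eq, Prod.ext_iff] at *
      constructor <;> omega
    rw [List.map_congr_left hptwise, List.map_id]
  have hCpts : ∀ p ∈ C, 1 ≤ p.1 ∧ 1 ≤ p.2 := by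
    intro p hp
    rw [hCdef] at hp
    obtain ⟨r, hr, rfl⟩ := List.mem_map.1 hp
    have := hge r hr
    simp only [hf]
    constructor <;> omega
  have hCal : IsAlignment (X.drop δ.1) (Z.drop δ.2) C := by
    refine ⟨by simp [hCdef], by simp [hCdef, hf], ?_, ?_⟩
    · have hlastA : ((1 + δ.1, 1 + δ.2) :: rest).getLast? = some (X.length + 1, Z.length + 1) := by
        have := hA.2.2.1
        rwa [List.getLast?_cons_cons] at this
      rw [hCdef, List.getLast?_map, hlastA]
      simp only [Option.map_some, Option.some_inj, Prod.ext_iff, hf, List.length_drop]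
      constructor <;> omega
    · have hch : ((1 + δ.1, 1 + δ.2) :: rest).Chain' GPstep := (List.isChain_cons_cons.1 hA.2.2.2).2
      rw [hCdef, List.Chain', List.isChain_map]
      refine chain'_mono_mem hch ?_
      intro a ha b _ hab
      have hga := hge a ha
      rcases hab with h | h | h <;> rw [h] <;>
        simp [hf, GPstep, Prod.ext_iff] <;> omega
  have hcost : alignCost X Z ((1,1) :: (1 + δ.1, 1 + δ.2) :: rest)
      = stepCost X Z (1,1) (1 + δ.1, 1 + δ.2) + alignCost (X.drop δ.1) (Z.drop δ.2) C := by
    rw [alignCost_cons₂, ← hid, alignCost_shf X Z δ C hCpts]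
  have hmemb : ∀ p ∈ C, (p.1 + δ.1, p.2 + δ.2) ∈ (1,1) :: (1 + δ.1, 1 + δ.2) :: rest := by
    intro p hp
    have : (p.1 + δ.1, p.2 + δ.2) ∈ shf δ C := List.mem_map.2 ⟨p, hp, rfl⟩
    rw [hid] at this
    exact List.mem_cons_of_mem _ this
  have hmemb2 : ∀ p ∈ ((1 + δ.1, 1 + δ.2) : ℕ × ℕ) :: rest,
      ∃ r ∈ C, p = (r.1 + δ.1, r.2 + δ.2) := by
    intro p hp
    rw [← hid, shf] at hp
    obtain ⟨r, hr, rfl⟩ := List.mem_map.1 hp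
    exact ⟨r, hr, rfl⟩
  refine ⟨δ, C, hδv, hd1, hd2, rfl, hCal, by simp [hCdef], hcost, ?_, hmemb, hmemb2⟩
  intro hg p hp hx hy
  have hp1 := points_ge hCal hp.1
  have hnm : (p.1 + δ.1, p.2 + δ.2) ∉ Matches X Z ((1,1) :: (1 + δ.1, 1 + δ.2) :: rest) := by
    intro hm
    apply hp.2
    refine (matches_prepend_iff X Z δ C hδ0 hd1 hd2 hCal hp1.1 hp1.2).1 ?_
    have heq2 : ((1,1) :: shf δ C) = (1,1) :: (1 + δ.1, 1 + δ.2) :: rest := by rw [hid]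
    rw [heq2]
    exact hm
  have hres := hg _ ⟨hmemb p hp.1, hnm⟩
    (by rw [List.length_drop] at hx; omega) (by rw [List.length_drop] at hy; omega)
  rw [chr_drop _ _ _ hp1.1, chr_drop _ _ _ hp1.2]
  exact hres

lemma head_chr_ne (X Z : List α) (A : List (ℕ × ℕ)) (q : ℕ × ℕ) (rest : List (ℕ × ℕ))
    (hA : IsAlignment X Z A) (hg : IsGreedy X Z A) (heq : A = (1,1) :: q :: rest)
    (h : ¬(q = (2,2) ∧ chr X 1 = chr Z 1))
    (hx : 1 ≤ X.length) (hz : 1 ≤ Z.length) : chr X 1 ≠ chr Z 1 := by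
  have hbrk : ((1,1) : ℕ × ℕ) ∈ Breakpoints X Z A := by
    refine ⟨by simp [heq], ?_⟩
    rintro ⟨t, h1, h2, _, _, h5⟩
    have ht := get?_one_one hA h1
    subst ht
    rw [heq] at h2
    simp only [List.getElem?_cons_succ, List.getElem?_cons_zero, Option.some_inj] at h2
    exact h ⟨by rw [← h2], h5⟩
  exact hg _ hbrk hx hz

----------------------------------------------------------------
-- SECTION 4 : Levenshtein distance, recursively
----------------------------------------------------------------

noncomputable def lev : List α → List α → ℕ
  | [], V => V.length
  | a :: U, [] => (a :: U).length
  | a :: U, b :: V =>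
      if a = b then lev U V
      else 1 + min (lev U (b :: V)) (min (lev (a :: U) V) (lev U V))

@[simp] lemma lev_nil_left (V : List α) : lev [] V = V.length := by
  rw [lev.eq_def]

@[simp] lemma lev_cons_nil (a : α) (U : List α) : lev (a :: U) [] = U.length + 1 := by
  rw [lev.eq_def]; rfl

@[simp] lemma lev_nil_right (U : List α) : lev U [] = U.length := by
  cases U <;> simp

lemma lev_cons_cons (a b : α) (U V : List α) :
    lev (a :: U) (b :: V) =
      if a = b then lev U V
      else 1 + min (lev U (b :: V)) (min (lev (a :: U) V) (lev U V)) := by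
  rw [lev.eq_def]

lemma lev_cons_cons_eq (a : α) (U V : List α) : lev (a :: U) (a :: V) = lev U V := by
  simp [lev_cons_cons]

/-- the four `±1` lemmas, proved jointly -/
lemma lev_aux : ∀ n : ℕ, ∀ U V : List α, U.length + V.length ≤ n →
    (∀ a : α, lev U V ≤ 1 + lev (a :: U) V) ∧
    (∀ b : α, lev U V ≤ 1 + lev U (b :: V)) ∧
    (∀ a : α, lev (a :: U) V ≤ 1 + lev U V) ∧
    (∀ b : α, lev U (b :: V) ≤ 1 + lev U V) := by
  intro n
  induction n with
  | zero =>
    intro U V h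
    have hU : U = [] := List.length_eq_zero_iff.1 (by omega)
    have hV : V = [] := List.length_eq_zero_iff.1 (by omega)
    subst hU; subst hV
    refine ⟨fun a => by simp, fun b => by simp, fun a => by simp, fun b => by simp⟩
  | succ n ih =>
    intro U V h
    refine ⟨?_, ?_, ?_, ?_⟩
    · -- lev U V ≤ 1 + lev (a :: U) V
      intro a
      cases V with
      | nil => simp; omega
      | cons b v =>
        rw [lev_cons_cons]
        by_cases hab : a = b
        · rw [if_pos hab]
          have := (ih U v (by simp at h ⊢; omega)).2.2.2 b
          omega
        · rw [if_neg hab]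
          have h1 := (ih U v (by simp at h ⊢; omega)).2.2.2 b
          have h2 := (ih U v (by simp at h ⊢; omega)).1 a
          omega
    · intro b
      cases U with
      | nil => simp; omega
      | cons a u =>
        rw [lev_cons_cons]
        by_cases hab : a = b
        · rw [if_pos hab]
          have := (ih u V (by simp at h ⊢; omega)).2.2.1 a
          omega
        · rw [if_neg hab]
          have h1 := (ih u V (by simp at h ⊢; omega)).2.2.1 a
          have h2 := (ih u V (by simp at h ⊢; omega)).2.1 b
          omega
    · -- lev (a :: U) V ≤ 1 + lev U V
      intro a
      cases V with
      | nil => simp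
      | cons b v =>
        rw [lev_cons_cons]
        by_cases hab : a = b
        · rw [if_pos hab]
          have := (ih U v (by simp at h ⊢; omega)).2.1 b
          omega
        · rw [if_neg hab]
          have : min (lev U (b :: v)) (min (lev (a :: U) v) (lev U v)) ≤ lev U (b :: v) :=
            min_le_left _ _
          omega
    · intro b
      cases U with
      | nil => simp
      | cons a u =>
        rw [lev_cons_cons]
        by_cases hab : a = b
        · rw [if_pos hab]
          have := (ih u V (by simp at h ⊢; omega)).1 a
          omega
        · rw [if_neg hab]
          have : min (lev u (b :: V)) (min (lev (a :: u) V) (lev u V)) ≤ lev (a :: u) V :=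
            le_trans (min_le_right _ _) (min_le_left _ _)
          omega

lemma lev_del_left (a : α) (U V : List α) : lev U V ≤ 1 + lev (a :: U) V :=
  (lev_aux (U.length + V.length) U V le_rfl).1 a

lemma lev_del_right (b : α) (U V : List α) : lev U V ≤ 1 + lev U (b :: V) :=
  (lev_aux (U.length + V.length) U V le_rfl).2.1 b

lemma lev_ins_left (a : α) (U V : List α) : lev (a :: U) V ≤ 1 + lev U V :=
  (lev_aux (U.length + V.length) U V le_rfl).2.2.1 a

lemma lev_ins_right (b : α) (U V : List α) : lev U (b :: V) ≤ 1 + lev U V :=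
  (lev_aux (U.length + V.length) U V le_rfl).2.2.2 b

/-- For differing heads, dropping both heads does not increase `lev`. -/
lemma lev_tail_tail (a b : α) (U V : List α) (hab : a ≠ b) :
    lev U V ≤ lev (a :: U) (b :: V) := by
  rw [lev_cons_cons, if_neg hab]
  have h1 := lev_del_right b U V
  have h2 := lev_del_left a U V
  omega

----------------------------------------------------------------
-- SECTION 5 : terminal constructions and step cost values
----------------------------------------------------------------

lemma stepCost_diag {X Y : List α} (h : chr X 1 = chr Y 1) :
    stepCost X Y (1,1) (2,2) = 0 := by
  simp [stepCost, h]

def vertL (m : ℕ) : List (ℕ × ℕ) := (List.range (m+1)).map (fun i => (1, i+1))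

def horizL (m : ℕ) : List (ℕ × ℕ) := (List.range (m+1)).map (fun i => (i+1, 1))

lemma vertL_alignment (Y : List α) : IsAlignment [] Y (vertL Y.length) := by
  refine ⟨by simp [vertL], ?_, ?_, ?_⟩
  · rw [vertL, List.head?_eq_getElem?, List.getElem?_map, List.getElem?_range (by omega)]
    rfl
  · rw [vertL, List.range_succ, List.map_append]
    simp
  · rw [vertL, List.Chain', List.isChain_map]
    rw [show Y.length + 1 = (Y.length).succ from rfl, List.isChain_range_succ]
    intro m _
    exact Or.inr (Or.inr rfl)

lemma horizL_alignment (Y : List α) : IsAlignment Y [] (horizL Y.length) := by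
  refine ⟨by simp [horizL], ?_, ?_, ?_⟩
  · rw [horizL, List.head?_eq_getElem?, List.getElem?_map, List.getElem?_range (by omega)]
    rfl
  · rw [horizL, List.range_succ, List.map_append]
    simp
  · rw [horizL, List.Chain', List.isChain_map]
    rw [show Y.length + 1 = (Y.length).succ from rfl, List.isChain_range_succ]
    intro m _
    exact Or.inr (Or.inl rfl)

lemma vertL_greedy (X Y : List α) (hX : X.length = 0) :
    IsGreedy X Y (vertL Y.length) := by
  intro p hp h1 _
  exfalso
  obtain ⟨i, _, rfl⟩ := List.mem_map.1 hp.1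
  simp at h1
  omega

lemma horizL_greedy (Y Z : List α) (hZ : Z.length = 0) :
    IsGreedy Y Z (horizL Y.length) := by
  intro p hp _ h2
  exfalso
  obtain ⟨i, _, rfl⟩ := List.mem_map.1 hp.1
  simp at h2
  omega

lemma vertL_cost (X Y : List α) : alignCost X Y (vertL Y.length) ≤ Y.length := by
  have := alignCost_le X Y (vertL Y.length)
  rwa [vertL, List.length_map, List.length_range, Nat.add_sub_cancel] at this

lemma horizL_cost (Y Z : List α) : alignCost Y Z (horizL Y.length) ≤ Y.length := by
  have := alignCost_le Y Z (horizL Y.length)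
  rwa [horizL, List.length_map, List.length_range, Nat.add_sub_cancel] at this

lemma one_one_mem_vertL (m : ℕ) : ((1,1) : ℕ × ℕ) ∈ vertL m :=
  List.mem_map.2 ⟨0, by simp, rfl⟩

lemma one_one_mem_horizL (m : ℕ) : ((1,1) : ℕ × ℕ) ∈ horizL m :=
  List.mem_map.2 ⟨0, by simp, rfl⟩

----------------------------------------------------------------
-- SECTION 6 : assembling one side
----------------------------------------------------------------

lemma mem_head_alignment {X Y : List α} {B : List (ℕ × ℕ)} (hB : IsAlignment X Y B) :
    ((1,1) : ℕ × ℕ) ∈ B := by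
  obtain ⟨T, rfl⟩ := alignment_cons hB
  exact List.mem_cons_self

lemma halfCombine (X Y : List α) (B' : List (ℕ × ℕ)) (δx δy : ℕ)
    (hδx : δx ≤ 1) (hδy : δy ≤ 1) (hX : δx ≤ X.length) (hY : δy ≤ Y.length)
    (hB' : IsAlignment (X.drop δx) (Y.drop δy) B')
    (hg : IsGreedy (X.drop δx) (Y.drop δy) B')
    (h1 : 1 ≤ X.length → 1 ≤ Y.length → chr X 1 = chr Y 1 →
      ((δx = 1 ∧ δy = 1) ∨ (δx = 0 ∧ δy = 0))) :
    ∃ B, IsAlignment X Y B ∧ IsGreedy X Y B ∧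
      alignCost X Y B ≤ stepCost X Y (1,1) (1 + δx, 1 + δy)
        + alignCost (X.drop δx) (Y.drop δy) B' ∧
      (∀ p : ℕ × ℕ, p ∈ B' → (p.1 + δx, p.2 + δy) ∈ B) := by
  by_cases hz : δx = 0 ∧ δy = 0
  · obtain ⟨rfl, rfl⟩ := hz
    rw [List.drop_zero, List.drop_zero] at hB' hg ⊢
    exact ⟨B', hB', hg, Nat.le_add_left _ _, fun p hp => by simpa using hp⟩
  · have hδv : ((δx, δy) : ℕ × ℕ) = (1,1) ∨ ((δx, δy) : ℕ × ℕ) = (1,0) ∨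
        ((δx, δy) : ℕ × ℕ) = (0,1) := by
      have : (δx = 1 ∧ δy = 1) ∨ (δx = 1 ∧ δy = 0) ∨ (δx = 0 ∧ δy = 1) := by omega
      rcases this with ⟨h1', h2'⟩ | ⟨h1', h2'⟩ | ⟨h1', h2'⟩ <;> subst h1' <;> subst h2' <;> simp
    have hpre := prepend_alignment X Y (δx, δy) B' hδv hX hY hB'
    have hgre := greedy_prepend X Y (δx, δy) B' (by simpa using hz) hX hY hB' hg
      (fun ha hb hc => by
        rcases h1 ha hb hc with ⟨r1, r2⟩ | ⟨r1, r2⟩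
        · subst r1; subst r2; rfl
        · exact absurd ⟨r1, r2⟩ hz)
    refine ⟨(1,1) :: shf (δx, δy) B', hpre.1, hgre, le_of_eq hpre.2, ?_⟩
    intro p hp
    exact List.mem_cons_of_mem _ (List.mem_map.2 ⟨p, hp, rfl⟩)

lemma branch {X Y Z : List α} {A C B1' B2' : List (ℕ × ℕ)} {q : ℕ × ℕ}
    {rest : List (ℕ × ℕ)} {δx δy δz K M : ℕ}
    (heqA : A = (1,1) :: q :: rest)
    (hδx : δx ≤ 1) (hδy : δy ≤ 1) (hδz : δz ≤ 1)
    (hX : δx ≤ X.length) (hY : δy ≤ Y.length) (hZ : δz ≤ Z.length)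
    (hmemb2 : ∀ p ∈ q :: rest, ∃ r ∈ C, p = (r.1 + δx, r.2 + δz))
    (hB1 : IsAlignment (X.drop δx) (Y.drop δy) B1')
    (hB1g : IsGreedy (X.drop δx) (Y.drop δy) B1')
    (hB1c : alignCost (X.drop δx) (Y.drop δy) B1' ≤ K)
    (hB2 : IsAlignment (Y.drop δy) (Z.drop δz) B2')
    (hB2g : IsGreedy (Y.drop δy) (Z.drop δz) B2')
    (hB2c : alignCost (Y.drop δy) (Z.drop δz) B2' ≤ K)
    (hprod : ∀ p ∈ C, ∃ y, (p.1, y) ∈ B1' ∧ (y, p.2) ∈ B2')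
    (h1 : 1 ≤ X.length → 1 ≤ Y.length → chr X 1 = chr Y 1 →
      ((δx = 1 ∧ δy = 1) ∨ (δx = 0 ∧ δy = 0)))
    (h2 : 1 ≤ Y.length → 1 ≤ Z.length → chr Y 1 = chr Z 1 →
      ((δy = 1 ∧ δz = 1) ∨ (δy = 0 ∧ δz = 0)))
    (harith1 : stepCost X Y (1,1) (1 + δx, 1 + δy) + K ≤ M)
    (harith2 : stepCost Y Z (1,1) (1 + δy, 1 + δz) + K ≤ M) :
    ∃ B1 B2, IsAlignment X Y B1 ∧ IsGreedy X Y B1 ∧ alignCost X Y B1 ≤ M ∧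
      IsAlignment Y Z B2 ∧ IsGreedy Y Z B2 ∧ alignCost Y Z B2 ≤ M ∧
      ∀ p ∈ A, ∃ y, (p.1, y) ∈ B1 ∧ (y, p.2) ∈ B2 := by
  obtain ⟨B1, hB1al, hB1gr, hB1co, hB1mem⟩ :=
    halfCombine X Y B1' δx δy hδx hδy hX hY hB1 hB1g h1
  obtain ⟨B2, hB2al, hB2gr, hB2co, hB2mem⟩ :=
    halfCombine Y Z B2' δy δz hδy hδz hY hZ hB2 hB2g h2
  refine ⟨B1, B2, hB1al, hB1gr, ?_, hB2al, hB2gr, ?_, ?_⟩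
  · calc alignCost X Y B1 ≤ stepCost X Y (1,1) (1 + δx, 1 + δy)
        + alignCost (X.drop δx) (Y.drop δy) B1' := hB1co
      _ ≤ stepCost X Y (1,1) (1 + δx, 1 + δy) + K := by omega
      _ ≤ M := harith1
  · calc alignCost Y Z B2 ≤ stepCost Y Z (1,1) (1 + δy, 1 + δz)
        + alignCost (Y.drop δy) (Z.drop δz) B2' := hB2co
      _ ≤ stepCost Y Z (1,1) (1 + δy, 1 + δz) + K := by omega
      _ ≤ M := harith2
  · intro p hp
    rw [heqA] at hp
    rcases List.mem_cons.1 hp with rfl | hp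
    · exact ⟨1, mem_head_alignment hB1al, mem_head_alignment hB2al⟩
    · obtain ⟨r, hr, rfl⟩ := hmemb2 p hp
      obtain ⟨y', hy1, hy2⟩ := hprod r hr
      exact ⟨y' + δy, hB1mem (r.1, y') hy1, hB2mem (y', r.2) hy2⟩

lemma terminal_case (Y : List α) :
    ∃ B1 B2, IsAlignment ([] : List α) Y B1 ∧ IsGreedy ([] : List α) Y B1 ∧
      alignCost ([] : List α) Y B1 ≤ Y.length ∧
      IsAlignment Y ([] : List α) B2 ∧ IsGreedy Y ([] : List α) B2 ∧
      alignCost Y ([] : List α) B2 ≤ Y.length ∧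
      ((1,1) : ℕ × ℕ) ∈ B1 ∧ ((1,1) : ℕ × ℕ) ∈ B2 :=
  ⟨vertL Y.length, horizL Y.length, vertL_alignment Y, vertL_greedy [] Y rfl,
    vertL_cost [] Y, horizL_alignment Y, horizL_greedy Y [] rfl, horizL_cost Y [],
    one_one_mem_vertL _, one_one_mem_horizL _⟩

----------------------------------------------------------------
-- SECTION 7 : the main induction
----------------------------------------------------------------

@[simp] lemma chr_one_cons (a : α) (l : List α) : chr (a :: l) 1 = some a := by simp [chr]

@[simp] lemma chr_nil (x : ℕ) : chr ([] : List α) x = none := by simp [chr]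

lemma stepCost_not_diag (X Y : List α) (p q : ℕ × ℕ) (h : q ≠ (p.1 + 1, p.2 + 1)) :
    stepCost X Y p q = 1 := by
  rw [stepCost, if_neg]
  exact fun hc => h hc.1

lemma main_terminal (Y : List α) (A : List (ℕ × ℕ)) (heqA : A = [(1,1)]) :
    ∃ B1 B2, IsAlignment ([] : List α) Y B1 ∧ IsGreedy ([] : List α) Y B1 ∧
      alignCost ([] : List α) Y B1 ≤ 2 * alignCost ([] : List α) ([] : List α) A + lev ([] : List α) Y ∧
      IsAlignment Y ([] : List α) B2 ∧ IsGreedy Y ([] : List α) B2 ∧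
      alignCost Y ([] : List α) B2 ≤ 2 * alignCost ([] : List α) ([] : List α) A + lev ([] : List α) Y ∧
      ∀ p ∈ A, ∃ y, (p.1, y) ∈ B1 ∧ (y, p.2) ∈ B2 := by
  obtain ⟨B1, B2, h1, h2, h3, h4, h5, h6, h7, h8⟩ := terminal_case Y
  subst heqA
  refine ⟨B1, B2, h1, h2, ?_, h4, h5, ?_, ?_⟩
  · rw [alignCost_singleton]; simpa using h3
  · rw [alignCost_singleton]; simpa using h6
  · intro p hp
    simp only [List.mem_singleton] at hp
    subst hp
    exact ⟨1, h7, h8⟩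

lemma main_ind : ∀ (n : ℕ) (X Y Z : List α) (A : List (ℕ × ℕ)),
    X.length + Y.length + Z.length ≤ n → IsAlignment X Z A → IsGreedy X Z A →
    ∃ B1 B2, IsAlignment X Y B1 ∧ IsGreedy X Y B1 ∧
      alignCost X Y B1 ≤ 2 * alignCost X Z A + lev X Y ∧
      IsAlignment Y Z B2 ∧ IsGreedy Y Z B2 ∧
      alignCost Y Z B2 ≤ 2 * alignCost X Z A + lev X Y ∧
      ∀ p ∈ A, ∃ y, (p.1, y) ∈ B1 ∧ (y, p.2) ∈ B2 := by
  intro n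
  induction n with
  | zero =>
    intro X Y Z A hn hA hg
    have hX : X = [] := List.length_eq_zero_iff.1 (by omega)
    have hY : Y = [] := List.length_eq_zero_iff.1 (by omega)
    have hZ : Z = [] := List.length_eq_zero_iff.1 (by omega)
    subst hX; subst hY; subst hZ
    obtain ⟨T, heqA⟩ := alignment_cons hA
    cases T with
    | nil => exact main_terminal [] A heqA
    | cons q rest =>
      exfalso
      obtain ⟨δ, C, hδv, hd1, hd2, hq, _⟩ := peel [] [] A q rest hA heqA
      rcases hδv with rfl | rfl | rfl <;> simp at hd1 hd2
  | succ n ih =>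
    intro X Y Z A hn hA hg
    obtain ⟨T, heqA⟩ := alignment_cons hA
    cases T with
    | nil =>
      have hlast := hA.2.2.1
      rw [heqA] at hlast
      simp only [List.getLast?_singleton, Option.some_inj, Prod.ext_iff] at hlast
      have hX : X = [] := List.length_eq_zero_iff.1 (by omega)
      have hZ : Z = [] := List.length_eq_zero_iff.1 (by omega)
      subst hX; subst hZ
      exact main_terminal Y A heqA
    | cons q rest =>
      obtain ⟨δ, C, hδv, hd1, hd2, hq, hCal, hClen, hcost, hgr, hmem1, hmem2⟩ :=
        peel X Z A q rest hA heqA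
      have hCg := hgr hg
      subst hq
      rcases hδv with rfl | rfl | rfl
      · -- A's step is diagonal
        rcases X with _ | ⟨x0, xt⟩
        · simp at hd1
        rcases Z with _ | ⟨z0, zt⟩
        · simp at hd2
        simp only [List.drop_one, List.tail_cons] at hCal hCg hcost hmem2
        by_cases hfree : x0 = z0
        · -- free diagonal step of A
          have hsc : stepCost (x0::xt) (z0::zt) (1,1) (1+1, 1+1) = 0 :=
            stepCost_diag (by simp [hfree])
          rcases Y with _ | ⟨y0, yt⟩
          · -- Y empty
            obtain ⟨B1', B2', p1, p2, p3, p4, p5, p6, p7⟩ :=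
              ih xt [] zt C (by simp at hn ⊢; omega) hCal hCg
            refine branch (δx := 1) (δy := 0) (δz := 1)
              (M := 2 * alignCost (x0::xt) (z0::zt) A + lev (x0::xt) []) heqA
              (by omega) (by omega) (by omega) (by simp) (by simp) (by simp)
              hmem2 p1 p2 p3 p4 p5 p6 p7
              (fun _ h _ => absurd h (by simp)) (fun h _ _ => absurd h (by simp)) ?_ ?_
            · have := stepCost_le_one (x0::xt) ([] : List α) (1,1) (1+1, 1+0)
              simp only [lev_nil_right, List.length_cons] at *
              omega
            · have := stepCost_le_one ([] : List α) (z0::zt) (1,1) (1+0, 1+1)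
              simp only [lev_nil_right, List.length_cons] at *
              omega
          · by_cases hE1 : x0 = y0
            · -- matched on all three
              obtain ⟨B1', B2', p1, p2, p3, p4, p5, p6, p7⟩ :=
                ih xt yt zt C (by simp at hn ⊢; omega) hCal hCg
              refine branch (δx := 1) (δy := 1) (δz := 1)
                (M := 2 * alignCost (x0::xt) (z0::zt) A + lev (x0::xt) (y0::yt)) heqA
                (by omega) (by omega) (by omega) (by simp) (by simp) (by simp)
                hmem2 p1 p2 p3 p4 p5 p6 p7
                (fun _ _ _ => Or.inl ⟨rfl, rfl⟩) (fun _ _ _ => Or.inl ⟨rfl, rfl⟩) ?_ ?_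
              · have hs1 : stepCost (x0::xt) (y0::yt) (1,1) (1+1, 1+1) = 0 :=
                  stepCost_diag (by simp [hE1])
                have hlev : lev (x0::xt) (y0::yt) = lev xt yt := by
                  subst hE1; exact lev_cons_cons_eq _ _ _
                omega
              · have hs2 : stepCost (y0::yt) (z0::zt) (1,1) (1+1, 1+1) = 0 :=
                  stepCost_diag (by simp [hE1 ▸ hfree])
                have hlev : lev (x0::xt) (y0::yt) = lev xt yt := by
                  subst hE1; exact lev_cons_cons_eq _ _ _
                omega
            · -- mismatch X/Y on a free step : three ways
              have hlev : lev (x0::xt) (y0::yt)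
                  = 1 + min (lev xt (y0::yt)) (min (lev (x0::xt) yt) (lev xt yt)) := by
                rw [lev_cons_cons, if_neg hE1]
              rcases min_cases (lev xt (y0::yt)) (min (lev (x0::xt) yt) (lev xt yt)) with
                ⟨hm, _⟩ | ⟨hm, hm'⟩
              · -- delete x0
                obtain ⟨B1', B2', p1, p2, p3, p4, p5, p6, p7⟩ :=
                  ih xt (y0::yt) zt C (by simp at hn ⊢; omega) hCal hCg
                refine branch (δx := 1) (δy := 0) (δz := 1)
                  (M := 2 * alignCost (x0::xt) (z0::zt) A + lev (x0::xt) (y0::yt)) heqA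
                  (by omega) (by omega) (by omega) (by simp) (by simp) (by simp)
                  hmem2 p1 p2 p3 p4 p5 p6 p7
                  (fun _ _ hc => absurd (by simpa using hc) hE1)
                  (fun _ _ hc => by simp only [chr_one_cons, Option.some_inj] at hc; exact absurd (hfree.trans hc.symm) hE1) ?_ ?_
                · have := stepCost_le_one (x0::xt) (y0::yt) (1,1) (1+1, 1+0)
                  omega
                · have := stepCost_le_one (y0::yt) (z0::zt) (1,1) (1+0, 1+1)
                  omega
              · rcases min_cases (lev (x0::xt) yt) (lev xt yt) with ⟨hm2, _⟩ | ⟨hm2, _⟩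
                · -- delete y0 : recurse on same A
                  obtain ⟨B1', B2', p1, p2, p3, p4, p5, p6, p7⟩ :=
                    ih (x0::xt) yt (z0::zt) A (by simp at hn ⊢; omega) hA hg
                  refine branch (δx := 0) (δy := 1) (δz := 0) (C := (1+(1,1).1, 1+(1,1).2) :: rest)
                    (M := 2 * alignCost (x0::xt) (z0::zt) A + lev (x0::xt) (y0::yt)) heqA
                    (by omega) (by omega) (by omega) (by simp) (by simp) (by simp)
                    (fun p hp => ⟨p, hp, by simp⟩) p1 p2 p3 p4 p5 p6
                    (fun p hp => p7 p (by rw [heqA]; exact List.mem_cons_of_mem _ hp))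
                    (fun _ _ hc => absurd (by simpa using hc) hE1)
                    (fun _ _ hc => by simp only [chr_one_cons, Option.some_inj] at hc; exact absurd (hfree.trans hc.symm) hE1) ?_ ?_
                  · have := stepCost_le_one (x0::xt) (y0::yt) (1,1) (1+0, 1+1)
                    omega
                  · have := stepCost_le_one (y0::yt) (z0::zt) (1,1) (1+1, 1+0)
                    omega
                · -- substitute
                  obtain ⟨B1', B2', p1, p2, p3, p4, p5, p6, p7⟩ :=
                    ih xt yt zt C (by simp at hn ⊢; omega) hCal hCg
                  refine branch (δx := 1) (δy := 1) (δz := 1)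
                    (M := 2 * alignCost (x0::xt) (z0::zt) A + lev (x0::xt) (y0::yt)) heqA
                    (by omega) (by omega) (by omega) (by simp) (by simp) (by simp)
                    hmem2 p1 p2 p3 p4 p5 p6 p7
                    (fun _ _ _ => Or.inl ⟨rfl, rfl⟩) (fun _ _ _ => Or.inl ⟨rfl, rfl⟩) ?_ ?_
                  · have := stepCost_le_one (x0::xt) (y0::yt) (1,1) (1+1, 1+1)
                    omega
                  · have := stepCost_le_one (y0::yt) (z0::zt) (1,1) (1+1, 1+1)
                    omega
        · -- costly diagonal step of A
          have hsc : stepCost (x0::xt) (z0::zt) (1,1) (1+1, 1+1) = 1 := by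
            rw [stepCost, if_neg]
            rintro ⟨-, hc⟩
            exact hfree (by simpa using hc)
          rcases Y with _ | ⟨y0, yt⟩
          · obtain ⟨B1', B2', p1, p2, p3, p4, p5, p6, p7⟩ :=
              ih xt [] zt C (by simp at hn ⊢; omega) hCal hCg
            refine branch (δx := 1) (δy := 0) (δz := 1)
              (M := 2 * alignCost (x0::xt) (z0::zt) A + lev (x0::xt) []) heqA
              (by omega) (by omega) (by omega) (by simp) (by simp) (by simp)
              hmem2 p1 p2 p3 p4 p5 p6 p7
              (fun _ h _ => absurd h (by simp)) (fun h _ _ => absurd h (by simp)) ?_ ?_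
            · have := stepCost_le_one (x0::xt) ([] : List α) (1,1) (1+1, 1+0)
              simp only [lev_nil_right, List.length_cons] at *
              omega
            · have := stepCost_le_one ([] : List α) (z0::zt) (1,1) (1+0, 1+1)
              simp only [lev_nil_right, List.length_cons] at *
              omega
          · by_cases hE1 : x0 = y0
            · obtain ⟨B1', B2', p1, p2, p3, p4, p5, p6, p7⟩ :=
                ih xt yt zt C (by simp at hn ⊢; omega) hCal hCg
              refine branch (δx := 1) (δy := 1) (δz := 1)
                (M := 2 * alignCost (x0::xt) (z0::zt) A + lev (x0::xt) (y0::yt)) heqA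
                (by omega) (by omega) (by omega) (by simp) (by simp) (by simp)
                hmem2 p1 p2 p3 p4 p5 p6 p7
                (fun _ _ _ => Or.inl ⟨rfl, rfl⟩) (fun _ _ _ => Or.inl ⟨rfl, rfl⟩) ?_ ?_
              · have hs1 : stepCost (x0::xt) (y0::yt) (1,1) (1+1, 1+1) = 0 :=
                  stepCost_diag (by simp [hE1])
                have hlev : lev (x0::xt) (y0::yt) = lev xt yt := by
                  subst hE1; exact lev_cons_cons_eq _ _ _
                omega
              · have := stepCost_le_one (y0::yt) (z0::zt) (1,1) (1+1, 1+1)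
                have hlev : lev (x0::xt) (y0::yt) = lev xt yt := by
                  subst hE1; exact lev_cons_cons_eq _ _ _
                omega
            · obtain ⟨B1', B2', p1, p2, p3, p4, p5, p6, p7⟩ :=
                ih xt yt zt C (by simp at hn ⊢; omega) hCal hCg
              have hlev := lev_tail_tail x0 y0 xt yt hE1
              refine branch (δx := 1) (δy := 1) (δz := 1)
                (M := 2 * alignCost (x0::xt) (z0::zt) A + lev (x0::xt) (y0::yt)) heqA
                (by omega) (by omega) (by omega) (by simp) (by simp) (by simp)
                hmem2 p1 p2 p3 p4 p5 p6 p7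
                (fun _ _ _ => Or.inl ⟨rfl, rfl⟩) (fun _ _ _ => Or.inl ⟨rfl, rfl⟩) ?_ ?_
              · have := stepCost_le_one (x0::xt) (y0::yt) (1,1) (1+1, 1+1)
                omega
              · have := stepCost_le_one (y0::yt) (z0::zt) (1,1) (1+1, 1+1)
                omega
      · -- A's step is horizontal
        rcases X with _ | ⟨x0, xt⟩
        · simp at hd1
        simp only [List.drop_one, List.tail_cons, List.drop_zero] at hCal hCg hcost hmem2
        have hsc : stepCost (x0::xt) Z (1,1) (1+1, 1+0) = 1 :=
          stepCost_not_diag _ _ _ _ (by simp)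
        by_cases hE1 : chr (x0::xt) 1 = chr Y 1
        · -- take the diagonal in B1
          rcases Y with _ | ⟨y0, yt⟩
          · simp at hE1
          have hx0y0 : x0 = y0 := by simpa using hE1
          have hE2 : chr (y0::yt) 1 ≠ chr Z 1 := by
            rcases Z with _ | ⟨zz0, zzt⟩
            · simp
            · have := head_chr_ne (x0::xt) (zz0::zzt) A _ rest hA hg heqA
                (by rintro ⟨hc, -⟩; simp [Prod.ext_iff] at hc) (by simp) (by simp)
              simpa [hx0y0] using this
          obtain ⟨B1', B2', p1, p2, p3, p4, p5, p6, p7⟩ :=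
            ih xt yt Z C (by simp at hn ⊢; omega) hCal hCg
          refine branch (δx := 1) (δy := 1) (δz := 0)
            (M := 2 * alignCost (x0::xt) Z A + lev (x0::xt) (y0::yt)) heqA
            (by omega) (by omega) (by omega) (by simp) (by simp) (by simp)
            hmem2 p1 p2 p3 p4 p5 p6 p7
            (fun _ _ _ => Or.inl ⟨rfl, rfl⟩) (fun _ _ hc => absurd hc hE2) ?_ ?_
          · have hs1 : stepCost (x0::xt) (y0::yt) (1,1) (1+1, 1+1) = 0 :=
              stepCost_diag (by simp [hx0y0])
            have hlev : lev (x0::xt) (y0::yt) = lev xt yt := by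
              subst hx0y0; exact lev_cons_cons_eq _ _ _
            omega
          · have := stepCost_le_one (y0::yt) Z (1,1) (1+1, 1+0)
            have hlev : lev (x0::xt) (y0::yt) = lev xt yt := by
              subst hx0y0; exact lev_cons_cons_eq _ _ _
            omega
        · -- just delete x0
          obtain ⟨B1', B2', p1, p2, p3, p4, p5, p6, p7⟩ :=
            ih xt Y Z C (by simp at hn ⊢; omega) hCal hCg
          have hlev := lev_del_left x0 xt Y
          refine branch (δx := 1) (δy := 0) (δz := 0)
            (M := 2 * alignCost (x0::xt) Z A + lev (x0::xt) Y) heqA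
            (by omega) (by omega) (by omega) (by simp) (by simp) (by simp)
            hmem2 p1 p2 p3 p4 p5 p6 p7
            (fun _ _ hc => absurd hc hE1) (fun _ _ _ => Or.inr ⟨rfl, rfl⟩) ?_ ?_
          · have := stepCost_le_one (x0::xt) Y (1,1) (1+1, 1+0)
            omega
          · have := stepCost_le_one Y Z (1,1) (1+0, 1+0)
            omega
      · -- A's step is vertical
        rcases Z with _ | ⟨z0, zt⟩
        · simp at hd2
        simp only [List.drop_one, List.tail_cons, List.drop_zero] at hCal hCg hcost hmem2
        have hsc : stepCost X (z0::zt) (1,1) (1+0, 1+1) = 1 :=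
          stepCost_not_diag _ _ _ _ (by simp)
        by_cases hE2 : chr Y 1 = chr (z0::zt) 1
        · rcases Y with _ | ⟨y0, yt⟩
          · simp at hE2
          have hy0z0 : y0 = z0 := by simpa using hE2
          have hE1 : chr X 1 ≠ chr (y0::yt) 1 := by
            rcases X with _ | ⟨xx0, xxt⟩
            · simp
            · have := head_chr_ne (xx0::xxt) (z0::zt) A _ rest hA hg heqA
                (by rintro ⟨hc, -⟩; simp [Prod.ext_iff] at hc) (by simp) (by simp)
              simp only [chr_one_cons] at this ⊢
              rw [hy0z0]
              exact this
          obtain ⟨B1', B2', p1, p2, p3, p4, p5, p6, p7⟩ :=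
            ih X yt zt C (by simp at hn ⊢; omega) hCal hCg
          have hlev := lev_del_right y0 X yt
          refine branch (δx := 0) (δy := 1) (δz := 1)
            (M := 2 * alignCost X (z0::zt) A + lev X (y0::yt)) heqA
            (by omega) (by omega) (by omega) (by simp) (by simp) (by simp)
            hmem2 p1 p2 p3 p4 p5 p6 p7
            (fun _ _ hc => absurd hc hE1) (fun _ _ _ => Or.inl ⟨rfl, rfl⟩) ?_ ?_
          · have := stepCost_le_one X (y0::yt) (1,1) (1+0, 1+1)
            omega
          · have hs2 : stepCost (y0::yt) (z0::zt) (1,1) (1+1, 1+1) = 0 :=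
              stepCost_diag (by simp [hy0z0])
            omega
        · obtain ⟨B1', B2', p1, p2, p3, p4, p5, p6, p7⟩ :=
            ih X Y zt C (by simp at hn ⊢; omega) hCal hCg
          refine branch (δx := 0) (δy := 0) (δz := 1)
            (M := 2 * alignCost X (z0::zt) A + lev X Y) heqA
            (by omega) (by omega) (by omega) (by simp) (by simp) (by simp)
            hmem2 p1 p2 p3 p4 p5 p6 p7
            (fun _ _ _ => Or.inr ⟨rfl, rfl⟩) (fun _ _ hc => absurd hc hE2) ?_ ?_
          · have := stepCost_le_one X Y (1,1) (1+0, 1+0)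
            omega
          · have := stepCost_le_one Y (z0::zt) (1,1) (1+0, 1+1)
            omega

----------------------------------------------------------------
-- SECTION 8 : ed = lev
----------------------------------------------------------------

lemma exists_alignment_le_lev : ∀ (n : ℕ) (X Y : List α), X.length + Y.length ≤ n →
    ∃ C, IsAlignment X Y C ∧ alignCost X Y C ≤ lev X Y := by
  intro n
  induction n with
  | zero =>
    intro X Y hn
    have hX : X = [] := List.length_eq_zero_iff.1 (by omega)
    have hY : Y = [] := List.length_eq_zero_iff.1 (by omega)
    subst hX; subst hY
    exact ⟨[(1,1)], ⟨by simp, by simp, by simp, List.isChain_singleton _⟩,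
      by simp [alignCost_singleton]⟩
  | succ n ih =>
    intro X Y hn
    rcases X with _ | ⟨x0, xt⟩
    · exact ⟨vertL Y.length, vertL_alignment Y, by simpa using vertL_cost [] Y⟩
    rcases Y with _ | ⟨y0, yt⟩
    · exact ⟨horizL (x0::xt).length, horizL_alignment (x0::xt),
        by simpa using horizL_cost (x0::xt) []⟩
    by_cases hE : x0 = y0
    · obtain ⟨C', hC', hc'⟩ := ih xt yt (by simp at hn ⊢; omega)
      obtain ⟨hal, hco⟩ := prepend_alignment (x0::xt) (y0::yt) (1,1) C'
        (Or.inl rfl) (by simp) (by simp) hC'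
      refine ⟨_, hal, ?_⟩
      rw [hco]
      simp only [List.drop_one, List.tail_cons, List.drop_zero]
      have hs : stepCost (x0::xt) (y0::yt) (1,1) (1+1, 1+1) = 0 :=
        stepCost_diag (by simp [hE])
      have hlev : lev (x0::xt) (y0::yt) = lev xt yt := by
        subst hE; exact lev_cons_cons_eq _ _ _
      omega
    · have hlev : lev (x0::xt) (y0::yt)
          = 1 + min (lev xt (y0::yt)) (min (lev (x0::xt) yt) (lev xt yt)) := by
        rw [lev_cons_cons, if_neg hE]
      rcases min_cases (lev xt (y0::yt)) (min (lev (x0::xt) yt) (lev xt yt)) with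
        ⟨hm, _⟩ | ⟨hm, _⟩
      · obtain ⟨C', hC', hc'⟩ := ih xt (y0::yt) (by simp at hn ⊢; omega)
        obtain ⟨hal, hco⟩ := prepend_alignment (x0::xt) (y0::yt) (1,0) C'
          (Or.inr (Or.inl rfl)) (by simp) (by simp) hC'
        refine ⟨_, hal, ?_⟩
        rw [hco]
        simp only [List.drop_one, List.tail_cons, List.drop_zero]
        have := stepCost_le_one (x0::xt) (y0::yt) (1,1) (1+1, 1+0)
        omega
      · rcases min_cases (lev (x0::xt) yt) (lev xt yt) with ⟨hm2, _⟩ | ⟨hm2, _⟩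
        · obtain ⟨C', hC', hc'⟩ := ih (x0::xt) yt (by simp at hn ⊢; omega)
          obtain ⟨hal, hco⟩ := prepend_alignment (x0::xt) (y0::yt) (0,1) C'
            (Or.inr (Or.inr rfl)) (by simp) (by simp) hC'
          refine ⟨_, hal, ?_⟩
          rw [hco]
          simp only [List.drop_one, List.tail_cons, List.drop_zero]
          have := stepCost_le_one (x0::xt) (y0::yt) (1,1) (1+0, 1+1)
          omega
        · obtain ⟨C', hC', hc'⟩ := ih xt yt (by simp at hn ⊢; omega)
          obtain ⟨hal, hco⟩ := prepend_alignment (x0::xt) (y0::yt) (1,1) C'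
            (Or.inl rfl) (by simp) (by simp) hC'
          refine ⟨_, hal, ?_⟩
          rw [hco]
          simp only [List.drop_one, List.tail_cons, List.drop_zero]
          have := stepCost_le_one (x0::xt) (y0::yt) (1,1) (1+1, 1+1)
          omega

lemma lev_le_alignCost : ∀ (n : ℕ) (C : List (ℕ × ℕ)) (X Y : List α), C.length ≤ n →
    IsAlignment X Y C → lev X Y ≤ alignCost X Y C := by
  intro n
  induction n with
  | zero =>
    intro C X Y hn hC
    exact absurd (List.length_eq_zero_iff.1 (by omega)) hC.1
  | succ n ih =>
    intro C X Y hn hC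
    obtain ⟨T, heqC⟩ := alignment_cons hC
    cases T with
    | nil =>
      have hlast := hC.2.2.1
      rw [heqC] at hlast
      simp only [List.getLast?_singleton, Option.some_inj, Prod.ext_iff] at hlast
      have hX : X = [] := List.length_eq_zero_iff.1 (by omega)
      have hY : Y = [] := List.length_eq_zero_iff.1 (by omega)
      subst hX; subst hY
      simp
    | cons q rest =>
      obtain ⟨δ, C', hδv, hd1, hd2, hq, hCal, hClen, hcost, _, _, _⟩ :=
        peel X Y C q rest hC heqC
      have hlen : C'.length ≤ n := by
        rw [heqC] at hn
        simp only [List.length_cons] at hn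
        omega
      have hihc := ih C' _ _ hlen hCal
      subst hq
      rcases hδv with rfl | rfl | rfl
      · rcases X with _ | ⟨x0, xt⟩
        · simp at hd1
        rcases Y with _ | ⟨y0, yt⟩
        · simp at hd2
        simp only [List.drop_one, List.tail_cons] at hCal hcost hihc
        by_cases hE : x0 = y0
        · have hlev : lev (x0::xt) (y0::yt) = lev xt yt := by
            subst hE; exact lev_cons_cons_eq _ _ _
          omega
        · have hlev : lev (x0::xt) (y0::yt)
              = 1 + min (lev xt (y0::yt)) (min (lev (x0::xt) yt) (lev xt yt)) := by
            rw [lev_cons_cons, if_neg hE]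
          have hmin : min (lev xt (y0::yt)) (min (lev (x0::xt) yt) (lev xt yt))
              ≤ lev xt yt := le_trans (min_le_right _ _) (min_le_right _ _)
          have hs : stepCost (x0::xt) (y0::yt) (1,1) (1+1, 1+1) = 1 := by
            rw [stepCost, if_neg]
            rintro ⟨-, hc⟩
            exact hE (by simpa using hc)
          omega
      · rcases X with _ | ⟨x0, xt⟩
        · simp at hd1
        simp only [List.drop_one, List.tail_cons, List.drop_zero] at hCal hcost hihc
        have hlev := lev_ins_left x0 xt Y
        have hs : stepCost (x0::xt) Y (1,1) (1+1, 1+0) = 1 :=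
          stepCost_not_diag _ _ _ _ (by simp)
        omega
      · rcases Y with _ | ⟨y0, yt⟩
        · simp at hd2
        simp only [List.drop_one, List.tail_cons, List.drop_zero] at hCal hcost hihc
        have hlev := lev_ins_right y0 X yt
        have hs : stepCost X (y0::yt) (1,1) (1+0, 1+1) = 1 :=
          stepCost_not_diag _ _ _ _ (by simp)
        omega

lemma ed_eq_lev (X Y : List α) : ed X Y = lev X Y := by
  obtain ⟨C, hC, hc⟩ := exists_alignment_le_lev (X.length + Y.length) X Y le_rfl
  apply le_antisymm
  · exact le_trans (Nat.sInf_le ⟨C, hC, rfl⟩) hc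
  · have hne : (alignCost X Y '' {A | IsAlignment X Y A}).Nonempty := ⟨_, ⟨C, hC, rfl⟩⟩
    obtain ⟨D, hD, hDeq⟩ := Nat.sInf_mem hne
    rw [ed, ← hDeq]
    exact lev_le_alignCost D.length D X Y le_rfl hD

----------------------------------------------------------------
-- SECTION 9 : the theorem
----------------------------------------------------------------

/-- Every greedy alignment `A` of `X` and `Z` of cost at most `k` is the
product of a greedy alignment of `X, Y` of cost at most `d` and a greedy alignment of
`Y, Z` of cost at most `d`, where `d = 2·cost(A) + ed(X,Y)`. -/
theorem greedy_product (X Y Z : List α) (k : ℕ) (A : List (ℕ × ℕ)) (hA : A ∈ GA k X Z) :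
    ∃ AXY ∈ GA (2 * alignCost X Z A + ed X Y) X Y,
      ∃ AYZ ∈ GA (2 * alignCost X Z A + ed X Y) Y Z,
        IsProductOf Y.length A AXY AYZ := by
  obtain ⟨hAal, hAg, -⟩ := hA
  obtain ⟨B1, B2, h1, h2, h3, h4, h5, h6, h7⟩ :=
    main_ind (X.length + Y.length + Z.length) X Y Z A le_rfl hAal hAg
  refine ⟨B1, ⟨h1, h2, ?_⟩, B2, ⟨h4, h5, ?_⟩, ?_⟩
  · rw [ed_eq_lev]; exact h3
  · rw [ed_eq_lev]; exact h6
  · intro p hp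
    obtain ⟨y, hy1, hy2⟩ := h7 p hp
    exact ⟨y, (points_ge h1 hy1).2, (points_le h1 hy1).2, hy1, hy2⟩
end

section
/- If the CGK walks over X and Y (with common randomness) are complete, then the zip alignment A of these walks is a greedy alignment of X and Y whose cost is at most hd(CGK(X), CGK(Y)), the Hamming distance between the CGK embeddings of X and Y. -/
open Classical

universe u

variable {α : Type u}

/-- One step of the CGK walk at time `t` from position `s` (1-indexed): if `s ≤ |S|`, move
forward by `R t (S[s]) ∈ {0,1}`; otherwise stay. -/
def cgkStep (R : ℕ → α → Bool) (S : List α) (t s : ℕ) : ℕ :=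
  match S[s - 1]? with
  | some a => s + (if R t a then 1 else 0)
  | none => s

/-- The CGK walk: `cgkWalk R S t` is the position `s_{t+1}` of the walk over `S`
(`s_1 = 1`, `s_{t+1} = s_t + R_t(S[s_t])` while `s_t ≤ |S|`). -/
def cgkWalk (R : ℕ → α → Bool) (S : List α) : ℕ → ℕ
  | 0 => 1
  | t + 1 => cgkStep R S (t + 1) (cgkWalk R S t)

/-- The CGK embedding of `S` (of length `3n`): the `t`-th character is `S[s_t]` if the
walk is inside `S`, and `⊥` (= `none`) otherwise. -/
def cgkEmb (R : ℕ → α → Bool) (S : List α) (n : ℕ) : List (Option α) :=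
  (List.range (3 * n)).map (fun t => S[cgkWalk R S t - 1]?)

/-- Hamming distance between two lists (number of positions where they differ). -/
noncomputable def hamming {β : Type u} (u v : List β) : ℕ :=
  ((Finset.range (max u.length v.length)).filter (fun i => u[i]? ≠ v[i]?)).card

/-- The zip alignment of the CGK walks over `X` and `Y`: pair the two walks step by step
and remove repeated (adjacent equal) entries. -/
def zipAlign (R : ℕ → α → Bool) (X Y : List α) (n : ℕ) : List (ℕ × ℕ) :=
  ((List.range (3 * n + 1)).map (fun t => (cgkWalk R X t, cgkWalk R Y t))).destutter (· ≠ ·)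


section AuxDestutter
variable {β : Type u} [inst : DecidableRel (fun (a b : β) => a ≠ b)]

lemma destutter'_head : ∀ (l : List β) (a : β), ∃ t, l.destutter' (· ≠ ·) a = a :: t := by
  intro l
  induction l with
  | nil => exact fun a => ⟨[], rfl⟩
  | cons b l ih =>
    intro a
    rw [List.destutter'_cons]
    split
    · exact ⟨_, rfl⟩
    · exact ih a

lemma destutter'_infix {p q : β} : ∀ (l : List β) (a : β),
    [p, q] <:+: l.destutter' (· ≠ ·) a → [p, q] <:+: a :: l := by
  intro l
  induction l with
  | nil =>
    intro a h
    rw [List.destutter'_nil] at h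
    exact absurd h.length_le (by simp)
  | cons b l ih =>
    intro a h
    rw [List.destutter'_cons] at h
    by_cases hab : a ≠ b
    · rw [if_pos hab] at h
      rcases List.infix_cons_iff.mp h with h | h
      · obtain ⟨t, ht⟩ := destutter'_head l b
        rw [ht] at h
        rcases List.cons_prefix_cons.mp h with ⟨rfl, h2⟩
        rcases List.cons_prefix_cons.mp h2 with ⟨rfl, -⟩
        exact ⟨[], l, rfl⟩
      · exact ((ih b h).trans (List.infix_cons (List.infix_refl _)))
    · rw [if_neg hab] at h
      push_neg at hab
      subst hab
      exact (ih a h).trans (List.infix_cons (List.infix_refl _))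

lemma destutter'_getLast? : ∀ (l : List β) (a : β),
    (l.destutter' (· ≠ ·) a).getLast? = (a :: l).getLast? := by
  intro l
  induction l with
  | nil => simp [List.destutter'_nil]
  | cons b l ih =>
    intro a
    rw [List.destutter'_cons]
    by_cases hab : a ≠ b
    · rw [if_pos hab]
      obtain ⟨t, ht⟩ := destutter'_head l b
      rw [ht, List.getLast?_cons_cons, List.getLast?_cons_cons, ← ht, ih b]
    · rw [if_neg hab]
      push_neg at hab
      subst hab
      rw [ih a, List.getLast?_cons_cons]

omit inst in
lemma adj_infix {l : List β} {i : ℕ} {p q : β}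
    (hp : l[i]? = some p) (hq : l[i + 1]? = some q) : [p, q] <:+: l := by
  obtain ⟨h1, e1⟩ := List.getElem?_eq_some_iff.mp hp
  obtain ⟨h2, e2⟩ := List.getElem?_eq_some_iff.mp hq
  refine ⟨l.take i, l.drop (i + 2), ?_⟩
  have d1 : l.drop i = p :: l.drop (i + 1) := by
    rw [List.drop_eq_getElem_cons h1, e1]
  have d2 : l.drop (i + 1) = q :: l.drop (i + 2) := by
    rw [List.drop_eq_getElem_cons h2, e2]
  calc l.take i ++ [p, q] ++ l.drop (i + 2)
      = l.take i ++ (p :: q :: l.drop (i + 2)) := by simp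
    _ = l.take i ++ l.drop i := by rw [d1, d2]
    _ = l := List.take_append_drop i l

omit inst in
lemma infix_adj {l : List β} {p q : β} (h : [p, q] <:+: l) :
    ∃ j, l[j]? = some p ∧ l[j + 1]? = some q := by
  obtain ⟨s, t, rfl⟩ := h
  refine ⟨s.length, ?_, ?_⟩
  · rw [List.append_assoc, List.getElem?_append_right le_rfl]
    simp
  · rw [List.append_assoc, List.getElem?_append_right (by omega)]
    simp

end AuxDestutter

lemma zip_tail_sum {β : Type u} (c : β → β → ℕ) (d : β) : ∀ L : List β,
    ((L.zip L.tail).map (fun pq => c pq.1 pq.2)).sum =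
      ∑ i ∈ Finset.range (L.length - 1), c (L.getD i d) (L.getD (i + 1) d) := by
  intro L
  induction L with
  | nil => simp
  | cons a L ih =>
    cases L with
    | nil => simp
    | cons b L' =>
      have hlen : (a :: b :: L').length - 1 = L'.length + 1 := by simp
      rw [hlen, Finset.sum_range_succ']
      have hsh : ∀ i, c ((a :: b :: L').getD (i + 1) d) ((a :: b :: L').getD (i + 1 + 1) d)
          = c ((b :: L').getD i d) ((b :: L').getD (i + 1) d) := fun i => rfl
      simp only [hsh]
      have hz : ((a :: b :: L').zip (a :: b :: L').tail)
          = (a, b) :: ((b :: L').zip (b :: L').tail) := rfl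
      rw [hz, List.map_cons, List.sum_cons, ih]
      have hl2 : (b :: L').length - 1 = L'.length := by simp
      rw [hl2]
      simp [add_comm]

lemma cgkStep_eq_or (R : ℕ → α → Bool) (S : List α) (t s : ℕ) :
    cgkStep R S t s = s ∨ cgkStep R S t s = s + 1 := by
  unfold cgkStep
  cases hg : S[s - 1]? with
  | none => exact Or.inl rfl
  | some a =>
    by_cases hr : R t a
    · exact Or.inr (by simp [hr])
    · exact Or.inl (by simp [hr])

lemma cgkStep_sync (R : ℕ → α → Bool) (X Y : List α) (t sx sy : ℕ)
    (h : X[sx - 1]? = Y[sy - 1]?) :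
    (cgkStep R X t sx = sx ∧ cgkStep R Y t sy = sy) ∨
    (cgkStep R X t sx = sx + 1 ∧ cgkStep R Y t sy = sy + 1) := by
  unfold cgkStep
  rw [h]
  cases hg : Y[sy - 1]? with
  | none => exact Or.inl ⟨rfl, rfl⟩
  | some a =>
    by_cases hr : R t a
    · exact Or.inr ⟨by simp [hr], by simp [hr]⟩
    · exact Or.inl ⟨by simp [hr], by simp [hr]⟩

lemma cgkWalk_succ (R : ℕ → α → Bool) (S : List α) (t : ℕ) :
    cgkWalk R S (t + 1) = cgkStep R S (t + 1) (cgkWalk R S t) := rfl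

lemma walk_step (R : ℕ → α → Bool) (S : List α) (t : ℕ) :
    cgkWalk R S (t + 1) = cgkWalk R S t ∨ cgkWalk R S (t + 1) = cgkWalk R S t + 1 := by
  rw [cgkWalk_succ]; exact cgkStep_eq_or R S (t + 1) (cgkWalk R S t)

lemma walk_sync (R : ℕ → α → Bool) (X Y : List α) (t : ℕ)
    (h : X[cgkWalk R X t - 1]? = Y[cgkWalk R Y t - 1]?) :
    (cgkWalk R X (t + 1) = cgkWalk R X t ∧ cgkWalk R Y (t + 1) = cgkWalk R Y t) ∨
    (cgkWalk R X (t + 1) = cgkWalk R X t + 1 ∧ cgkWalk R Y (t + 1) = cgkWalk R Y t + 1) := by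
  rw [cgkWalk_succ, cgkWalk_succ]
  exact cgkStep_sync R X Y (t + 1) _ _ h

/-- The condition for a step of an alignment to be costly. -/
def costly (X Y : List α) (A : List (ℕ × ℕ)) (i : ℕ) : Prop :=
  ¬ (A.getD (i + 1) (0, 0) = ((A.getD i (0, 0)).1 + 1, (A.getD i (0, 0)).2 + 1) ∧
      chr X (A.getD i (0, 0)).1 = chr Y (A.getD i (0, 0)).2)

lemma stepCost_eq_ite (X Y : List α) (A : List (ℕ × ℕ)) (i : ℕ) :
    stepCost X Y (A.getD i (0, 0)) (A.getD (i + 1) (0, 0)) =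
      if costly X Y A i then 1 else 0 := by
  unfold stepCost costly
  by_cases h : A.getD (i + 1) (0, 0) = ((A.getD i (0, 0)).1 + 1, (A.getD i (0, 0)).2 + 1) ∧
      chr X (A.getD i (0, 0)).1 = chr Y (A.getD i (0, 0)).2
  · rw [if_pos h, if_neg (not_not_intro h)]
  · rw [if_neg h, if_pos h]

/-- The pair of walk positions at time `t`. -/
def cgkPair (R : ℕ → α → Bool) (X Y : List α) (t : ℕ) : ℕ × ℕ :=
  (cgkWalk R X t, cgkWalk R Y t)

/-- If the CGK walks over `X` and `Y` (with common randomness `R`) are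
complete, then the zip alignment of the walks is a greedy alignment of `X` and `Y` whose
cost is at most the Hamming distance between the CGK embeddings of `X` and `Y`. -/
theorem cgk_zip_alignment_greedy (n : ℕ) (R : ℕ → α → Bool) (X Y : List α)
    (hX : X.length ≤ n) (hY : Y.length ≤ n)
    (hcX : cgkWalk R X (3 * n) = X.length + 1)
    (hcY : cgkWalk R Y (3 * n) = Y.length + 1) :
    IsAlignment X Y (zipAlign R X Y n) ∧ IsGreedy X Y (zipAlign R X Y n) ∧
    alignCost X Y (zipAlign R X Y n) ≤ hamming (cgkEmb R X n) (cgkEmb R Y n) := by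
  classical
  set A := zipAlign R X Y n with hA
  set l : List (ℕ × ℕ) := (List.range (3 * n + 1)).map (cgkPair R X Y) with hl
  have hAdef : A = l.destutter (· ≠ ·) := rfl
  set l0 : List (ℕ × ℕ) := (List.range (3 * n)).map (cgkPair R X Y ∘ Nat.succ) with hl0
  have hlcons : l = cgkPair R X Y 0 :: l0 := by
    rw [hl, List.range_succ_eq_map, List.map_cons, List.map_map]
  have hA' : A = l0.destutter' (· ≠ ·) (cgkPair R X Y 0) := by
    rw [hAdef, hlcons, List.destutter_cons']
  -- decoding get? on l
  have hl_get : ∀ {j : ℕ} {p : ℕ × ℕ}, l[j]? = some p →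
      j < 3 * n + 1 ∧ cgkPair R X Y j = p := by
    intro j p h
    rw [hl, List.getElem?_map] at h
    have hj : j < 3 * n + 1 := by
      cases hr : (List.range (3 * n + 1))[j]? with
      | none => rw [hr] at h; simp at h
      | some m =>
        have := (List.getElem?_eq_some_iff.mp hr).1
        simpa using this
    rw [List.getElem?_range hj] at h
    simp only [Option.map_some] at h
    exact ⟨hj, by injection h⟩
  -- consecutive elements of A are adjacent in l
  have hadj : ∀ {p q : ℕ × ℕ}, [p, q] <:+: A →
      ∃ j, j < 3 * n ∧ cgkPair R X Y j = p ∧ cgkPair R X Y (j + 1) = q := by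
    intro p q h
    rw [hA'] at h
    have h2 : [p, q] <:+: l := by rw [hlcons]; exact destutter'_infix _ _ h
    obtain ⟨j, hp, hq⟩ := infix_adj h2
    obtain ⟨hj1, he1⟩ := hl_get hp
    obtain ⟨hj2, he2⟩ := hl_get hq
    exact ⟨j, by omega, he1, he2⟩
  have hchain_ne : A.Chain' (· ≠ ·) := by
    rw [hAdef]; exact List.isChain_destutter _ l
  have hconsec : ∀ {i : ℕ} {p q : ℕ × ℕ}, A[i]? = some p → A[i + 1]? = some q →
      p ≠ q ∧ ∃ j, j < 3 * n ∧ cgkPair R X Y j = p ∧ cgkPair R X Y (j + 1) = q := by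
    intro i p q hp hq
    have hinf := adj_infix hp hq
    have hne : p ≠ q := by
      obtain ⟨h1, e1⟩ := List.getElem?_eq_some_iff.mp hp
      obtain ⟨h2, e2⟩ := List.getElem?_eq_some_iff.mp hq
      have hlt : i + 1 < A.length := by omega
      have := List.isChain_iff_getElem.mp hchain_ne i hlt
      rw [e1, e2] at this
      exact this
    exact ⟨hne, hadj hinf⟩
  -- step analysis
  have hstep3 : ∀ {p q : ℕ × ℕ}, p ≠ q → ∀ {j : ℕ}, cgkPair R X Y j = p →
      cgkPair R X Y (j + 1) = q →
      q = (p.1 + 1, p.2 + 1) ∨ q = (p.1 + 1, p.2) ∨ q = (p.1, p.2 + 1) := by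
    intro p q hne j hp hq
    subst hp; subst hq
    rcases walk_step R X j with hx | hx <;> rcases walk_step R Y j with hy | hy
    · exact absurd (by simp [cgkPair, Prod.ext_iff, hx, hy]) hne
    · exact Or.inr (Or.inr (by simp [cgkPair, Prod.ext_iff, hx, hy]))
    · exact Or.inr (Or.inl (by simp [cgkPair, Prod.ext_iff, hx, hy]))
    · exact Or.inl (by simp [cgkPair, Prod.ext_iff, hx, hy])
  have hne_nil : A ≠ [] := by
    rw [hA']; exact List.destutter'_ne_nil l0 (· ≠ ·)
  have hhead : A.head? = some (1, 1) := by
    obtain ⟨t, ht⟩ := destutter'_head l0 (cgkPair R X Y 0)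
    rw [hA', ht]
    rfl
  have hlast : A.getLast? = some (X.length + 1, Y.length + 1) := by
    rw [hA', destutter'_getLast? l0 _, ← hlcons]
    have hsplit : l = (List.range (3 * n)).map (cgkPair R X Y) ++ [cgkPair R X Y (3 * n)] := by
      rw [hl, List.range_succ, List.map_append]; rfl
    rw [hsplit, List.getLast?_concat]
    have : cgkPair R X Y (3 * n) = (X.length + 1, Y.length + 1) := by
      unfold cgkPair; rw [hcX, hcY]
    rw [this]
  have hchain_step : A.Chain' (fun p q => q = (p.1 + 1, p.2 + 1) ∨ q = (p.1 + 1, p.2) ∨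
      q = (p.1, p.2 + 1)) := by
    refine List.isChain_iff_getElem.mpr ?_
    intro i hi
    have hp : A[i]? = some A[i] := List.getElem?_eq_getElem (by omega)
    have hq : A[i + 1]? = some A[i + 1] := List.getElem?_eq_getElem hi
    obtain ⟨hne, j, hj, hjp, hjq⟩ := hconsec hp hq
    exact hstep3 hne hjp hjq
  have halign : IsAlignment X Y A := ⟨hne_nil, hhead, hlast, hchain_step⟩
  refine ⟨halign, ?_, ?_⟩
  · -- greedy
    intro p hp hpx hpy hchr
    obtain ⟨hmem, hnm⟩ := hp
    obtain ⟨i, hip⟩ := List.mem_iff_getElem?.mp hmem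
    cases hq : A[i + 1]? with
    | none =>
      have hlen : A.length ≤ i + 1 := List.getElem?_eq_none_iff.mp hq
      have hi : i < A.length := (List.getElem?_eq_some_iff.mp hip).1
      have hilast : A.getLast? = A[i]? := by
        rw [List.getLast?_eq_getLast hne_nil, List.getLast_eq_getElem,
          ← List.getElem?_eq_getElem]
        congr 1
        omega
      rw [hlast, hip] at hilast
      have : p.1 = X.length + 1 := by
        have := (Option.some.inj hilast).symm
        rw [this]
      omega
    | some q =>
      obtain ⟨hne, j, hj, hjp, hjq⟩ := hconsec hip hq
      have h1 : cgkWalk R X j = p.1 := by rw [← hjp]; rfl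
      have h2 : cgkWalk R Y j = p.2 := by rw [← hjp]; rfl
      have hch : X[cgkWalk R X j - 1]? = Y[cgkWalk R Y j - 1]? := by
        rw [h1, h2]; exact hchr
      rcases walk_sync R X Y j hch with ⟨e1, e2⟩ | ⟨e1, e2⟩
      · apply hne
        rw [← hjp, ← hjq]
        unfold cgkPair
        rw [e1, e2]
      · apply hnm
        refine ⟨i, hip, ?_, hpx, hpy, hchr⟩
        rw [hq]
        congr 1
        rw [← hjq]
        unfold cgkPair
        rw [e1, e2, h1, h2]
  · -- cost bound
    have hulen : (cgkEmb R X n).length = 3 * n := by simp [cgkEmb]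
    have hvlen : (cgkEmb R Y n).length = 3 * n := by simp [cgkEmb]
    unfold hamming
    rw [hulen, hvlen, max_self]
    unfold alignCost
    rw [zip_tail_sum (stepCost X Y) (0, 0) A]
    set m := A.length - 1 with hm
    rw [Finset.sum_congr rfl (fun i _ => stepCost_eq_ite X Y A i)]
    have hsb : (∑ i ∈ Finset.range m, if costly X Y A i then (1 : ℕ) else 0) =
        ((Finset.range m).filter (fun i => costly X Y A i)).card := by
      simp [Finset.sum_boole]
    rw [hsb]
    have hmain : ((Finset.range m).filter (fun i => costly X Y A i)).card ≤
        ((Finset.range (3 * n)).filter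
          (fun i => (cgkEmb R X n)[i]? ≠ (cgkEmb R Y n)[i]?)).card := by
      -- nodup of A
      have hchain_lt : A.Chain' (fun p q => p.1 + p.2 < q.1 + q.2) := by
        refine hchain_step.imp ?_
        intro p q h
        rcases h with h | h | h <;> rw [h] <;> simp <;> omega
      haveI : IsTrans (ℕ × ℕ) (fun p q => p.1 + p.2 < q.1 + q.2) :=
        ⟨fun a b c h1 h2 => h1.trans h2⟩
      have hnodup : A.Nodup := by
        refine (List.isChain_iff_pairwise.mp hchain_lt).imp ?_
        intro a b h heq
        rw [heq] at h
        omega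
      -- the data of each costly step
      have hdata : ∀ i ∈ (Finset.range m).filter (fun i => costly X Y A i),
          ∃ j, j < 3 * n ∧ cgkPair R X Y j = A.getD i (0, 0) ∧
            cgkPair R X Y (j + 1) = A.getD (i + 1) (0, 0) := by
        intro i hi
        have him : i < m := Finset.mem_range.mp (Finset.mem_filter.mp hi).1
        have hi1 : i < A.length := by omega
        have hi2 : i + 1 < A.length := by omega
        have hgp : A[i]? = some (A.getD i (0, 0)) := by
          rw [List.getD_eq_getElem (hn := hi1)]; exact List.getElem?_eq_getElem _
        have hgq : A[i + 1]? = some (A.getD (i + 1) (0, 0)) := by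
          rw [List.getD_eq_getElem (hn := hi2)]; exact List.getElem?_eq_getElem _
        obtain ⟨hne, j, hj, hjp, hjq⟩ := hconsec hgp hgq
        exact ⟨j, hj, hjp, hjq⟩
      set wit : ℕ → ℕ := fun i =>
        if h : ∃ j, j < 3 * n ∧ cgkPair R X Y j = A.getD i (0, 0) ∧
            cgkPair R X Y (j + 1) = A.getD (i + 1) (0, 0) then h.choose else 0 with hwit
      have hwspec : ∀ i ∈ (Finset.range m).filter (fun i => costly X Y A i),
          wit i < 3 * n ∧ cgkPair R X Y (wit i) = A.getD i (0, 0) ∧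
            cgkPair R X Y (wit i + 1) = A.getD (i + 1) (0, 0) := by
        intro i hi
        have h := hdata i hi
        rw [hwit]
        simp only [dif_pos h]
        exact h.choose_spec
      apply Finset.card_le_card_of_injOn wit
      · -- maps into the hamming difference set
        intro i hi
        obtain ⟨hw1, hw2, hw3⟩ := hwspec i hi
        have hne : A.getD i (0, 0) ≠ A.getD (i + 1) (0, 0) := by
          have him : i < m := Finset.mem_range.mp (Finset.mem_filter.mp hi).1
          have hi1 : i < A.length := by omega
          have hi2 : i + 1 < A.length := by omega
          have hgp : A[i]? = some (A.getD i (0, 0)) := by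
            rw [List.getD_eq_getElem (hn := hi1)]; exact List.getElem?_eq_getElem _
          have hgq : A[i + 1]? = some (A.getD (i + 1) (0, 0)) := by
            rw [List.getD_eq_getElem (hn := hi2)]; exact List.getElem?_eq_getElem _
          exact (hconsec hgp hgq).1
        have hnc : costly X Y A i := (Finset.mem_filter.mp hi).2
        rw [Finset.mem_coe, Finset.mem_filter]
        refine ⟨Finset.mem_range.mpr hw1, ?_⟩
        have hu : (cgkEmb R X n)[wit i]? =
            some (X[cgkWalk R X (wit i) - 1]?) := by
          unfold cgkEmb
          rw [List.getElem?_map, List.getElem?_range hw1]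
          rfl
        have hv : (cgkEmb R Y n)[wit i]? =
            some (Y[cgkWalk R Y (wit i) - 1]?) := by
          unfold cgkEmb
          rw [List.getElem?_map, List.getElem?_range hw1]
          rfl
        rw [hu, hv]
        intro hsome
        have hch : X[cgkWalk R X (wit i) - 1]? = Y[cgkWalk R Y (wit i) - 1]? :=
          Option.some.inj hsome
        have h1 : cgkWalk R X (wit i) = (A.getD i (0, 0)).1 := by rw [← hw2]; rfl
        have h2 : cgkWalk R Y (wit i) = (A.getD i (0, 0)).2 := by rw [← hw2]; rfl
        rcases walk_sync R X Y (wit i) hch with ⟨e1, e2⟩ | ⟨e1, e2⟩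
        · apply hne
          rw [← hw2, ← hw3]
          unfold cgkPair
          rw [e1, e2]
        · refine absurd ⟨?_, ?_⟩ hnc
          · rw [← hw3]
            unfold cgkPair
            rw [e1, e2, h1, h2]
          · show chr X (A.getD i (0,0)).1 = chr Y (A.getD i (0,0)).2
            unfold chr
            rw [← h1, ← h2]
            exact hch
      · -- injectivity
        intro i hi i' hi' heq
        obtain ⟨hw1, hw2, hw3⟩ := hwspec i hi
        obtain ⟨hw1', hw2', hw3'⟩ := hwspec i' hi'
        have hAeq : A.getD i (0, 0) = A.getD i' (0, 0) := by
          rw [← hw2, ← hw2', heq]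
        have him : i < m := Finset.mem_range.mp (Finset.mem_filter.mp hi).1
        have him' : i' < m := Finset.mem_range.mp (Finset.mem_filter.mp hi').1
        have hi1 : i < A.length := by omega
        have hi1' : i' < A.length := by omega
        rw [List.getD_eq_getElem (hn := hi1), List.getD_eq_getElem (hn := hi1')] at hAeq
        exact hnodup.getElem_inj_iff.mp hAeq


    refine le_of_le_of_eq hmain ?_
    congr
end

section
/- Let S be a string and k a positive integer, and suppose the fragment S[ℓ..r) (non-empty) satisfies maxRevLZ(S[ℓ..r)) ≤ k, where maxRevLZ(W) := max over all fragments W' of W of |LZ(reverse(W'))|. Then: (a) maxRevLZ(S[ℓ..r]) ≤ k if and only if |LZ(reverse(S[ℓ..r]))| ≤ k; (b) maxRevLZ(S[ℓ+1..r)) ≤ k; and (c) maxRevLZ(S[ℓ..r]) ≤ k+1. -/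
open Classical

universe u

variable {α : Type u}

/-- The fragment `X[i..i+ℓ)` of a string (1-indexed, half-open). -/
def frag (X : List α) (i ℓ : ℕ) : List α := (X.drop (i - 1)).take ℓ

/-- `X[i..i+ℓ)` is a previous factor: a non-empty fragment of `X` that also occurs
starting at some earlier position `i' < i`. -/
def IsPrevFactor (X : List α) (i ℓ : ℕ) : Prop :=
  1 ≤ ℓ ∧ i + ℓ ≤ X.length + 1 ∧ ∃ i', 1 ≤ i' ∧ i' < i ∧ frag X i' ℓ = frag X i ℓ

/-- The length of the LZ77 phrase starting at position `i`: the longest previous factor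
starting there, or a single character if none exists. -/
noncomputable def lzNext (X : List α) (i : ℕ) : ℕ :=
  max 1 (sSup {ℓ | IsPrevFactor X i ℓ})

/-- Auxiliary fuelled counter for the number of LZ77 phrases starting from position `i`. -/
noncomputable def lzCountAux (X : List α) : ℕ → ℕ → ℕ
  | 0, _ => 0
  | fuel + 1, i => if X.length < i then 0 else 1 + lzCountAux X fuel (i + lzNext X i)

/-- `|LZ(X)|`: the number of phrases of the (greedy) LZ77 factorization of `X`. -/
noncomputable def lzSize (X : List α) : ℕ := lzCountAux X (X.length + 1) 1

/-- An LZ-like factorization of `X`: non-empty phrases whose concatenation is `X`, where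
every phrase of length `> 1` is a previous factor at its position. -/
def IsLZLike (X : List α) (F : List (List α)) : Prop :=
  F.flatten = X ∧ (∀ p ∈ F, p ≠ []) ∧
  ∀ (a b : List (List α)) (p : List α), F = a ++ p :: b → 1 < p.length →
    ∃ i', 1 ≤ i' ∧ i' < a.flatten.length + 1 ∧ frag X i' p.length = p

/-- `maxRevLZ(W)`: the maximum, over all fragments `W'` of `W`, of the number of LZ77
phrases of `reverse(W')`. -/
noncomputable def maxRevLZ (W : List α) : ℕ :=
  sSup {z | ∃ l n, z = lzSize (((W.drop l).take n).reverse)}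

-- ## basic lzNext facts

lemma one_le_lzNext (X : List α) (i : ℕ) : 1 ≤ lzNext X i := le_max_left _ _

lemma bddAbove_prevFactor (X : List α) (i : ℕ) : BddAbove {ℓ | IsPrevFactor X i ℓ} :=
  ⟨X.length + 1, fun ℓ hℓ => le_trans (Nat.le_add_left ℓ i) hℓ.2.1⟩

lemma le_lzNext {X : List α} {i ℓ : ℕ} (h : IsPrevFactor X i ℓ) : ℓ ≤ lzNext X i :=
  le_trans (le_csSup (bddAbove_prevFactor X i) h) (le_max_right _ _)

lemma lzNext_spec (X : List α) (i : ℕ) :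
    lzNext X i = 1 ∨ IsPrevFactor X i (lzNext X i) := by
  by_cases hne : {ℓ | IsPrevFactor X i ℓ}.Nonempty
  · right
    have hmem := Nat.sSup_mem hne (bddAbove_prevFactor X i)
    have h1 : 1 ≤ sSup {ℓ | IsPrevFactor X i ℓ} := hmem.1
    unfold lzNext
    rw [max_eq_right h1]
    exact hmem
  · left
    unfold lzNext
    rw [Set.not_nonempty_iff_eq_empty.mp hne]
    simp

lemma add_lzNext_le {X : List α} {i : ℕ} (h : i ≤ X.length) :
    i + lzNext X i ≤ X.length + 1 := by
  rcases lzNext_spec X i with h1 | hp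
  · omega
  · exact hp.2.1

-- ## fuel facts

lemma lzCountAux_le_fuel (X : List α) : ∀ fuel i, lzCountAux X fuel i ≤ fuel := by
  intro fuel
  induction fuel with
  | zero => intro i; simp [lzCountAux]
  | succ fuel ih =>
    intro i
    unfold lzCountAux
    split
    · omega
    · have := ih (i + lzNext X i); omega

lemma lzCountAux_stab (X : List α) : ∀ fuel i, X.length + 1 ≤ fuel + i →
    lzCountAux X (fuel + 1) i = lzCountAux X fuel i := by
  intro fuel
  induction fuel with
  | zero =>
    intro i hi
    have : X.length < i := by omega
    simp [lzCountAux, this]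
  | succ fuel ih =>
    intro i hi
    show (if X.length < i then 0 else 1 + lzCountAux X (fuel + 1) (i + lzNext X i)) =
      (if X.length < i then 0 else 1 + lzCountAux X fuel (i + lzNext X i))
    split
    · rfl
    · have h1 := one_le_lzNext X i
      rw [ih (i + lzNext X i) (by omega)]

lemma lzCountAux_of_le (X : List α) : ∀ d fuel i, X.length + 1 ≤ fuel + i →
    lzCountAux X (fuel + d) i = lzCountAux X fuel i := by
  intro d
  induction d with
  | zero => intro fuel i _; rfl
  | succ d ih =>
    intro fuel i hi
    have : fuel + (d + 1) = (fuel + d) + 1 := by omega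
    rw [this, lzCountAux_stab X (fuel + d) i (by omega), ih fuel i hi]

noncomputable def lzCount (X : List α) (i : ℕ) : ℕ := lzCountAux X (X.length + 1) i

lemma lzCount_eq (X : List α) (i : ℕ) :
    lzCount X i = if X.length < i then 0 else 1 + lzCount X (i + lzNext X i) := by
  show (if X.length < i then 0 else 1 + lzCountAux X X.length (i + lzNext X i)) = _
  split
  · rfl
  · congr 1
    have h1 := one_le_lzNext X i
    have : X.length + 1 = X.length + 1 := rfl
    unfold lzCount
    rw [show X.length + 1 = X.length + 1 from rfl]
    rw [show (X.length + 1) = X.length + 1 from rfl]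
    exact (lzCountAux_of_le X 1 X.length (i + lzNext X i) (by omega)).symm

lemma lzSize_eq_lzCount (X : List α) : lzSize X = lzCount X 1 := rfl

lemma lzSize_le (X : List α) : lzSize X ≤ X.length + 1 := lzCountAux_le_fuel X _ 1

-- ## frag algebra

lemma frag_eq_take {X : List α} {m a L : ℕ} (h : a - 1 + L ≤ m) :
    frag (X.take m) a L = frag X a L := by
  unfold frag
  rw [List.drop_take, List.take_take]
  congr 1
  omega

lemma frag_sub {X : List α} {a b L d L' : ℕ} (ha : 1 ≤ a) (hb : 1 ≤ b)
    (h : frag X a L = frag X b L) (hd : d + L' ≤ L) :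
    frag X (a + d) L' = frag X (b + d) L' := by
  have key : ∀ c : ℕ, 1 ≤ c → frag X (c + d) L' = ((frag X c L).drop d).take L' := by
    intro c hc
    unfold frag
    rw [List.drop_take, List.take_take, List.drop_drop]
    congr 1
    · omega
    · congr 1; omega
  rw [key a ha, key b hb, h]

lemma isPrevFactor_take {X : List α} {m i ℓ : ℕ} (hm : m ≤ X.length)
    (h : IsPrevFactor X i ℓ) (hend : i + ℓ ≤ m + 1) :
    IsPrevFactor (X.take m) i ℓ := by
  obtain ⟨h1, h2, i', hi1, hi2, hfrag⟩ := h
  refine ⟨h1, ?_, i', hi1, hi2, ?_⟩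
  · rw [List.length_take]; omega
  · rw [frag_eq_take (by omega), frag_eq_take (by omega), hfrag]

lemma isPrevFactor_cons {X : List α} {c : α} {i ℓ : ℕ}
    (h : IsPrevFactor X i ℓ) : IsPrevFactor (c :: X) (i + 1) ℓ := by
  obtain ⟨h1, h2, i', hi1, hi2, hfrag⟩ := h
  have key : ∀ j, 1 ≤ j → frag (c :: X) (j + 1) ℓ = frag X j ℓ := by
    intro j hj
    unfold frag
    congr 1
    rw [show j + 1 - 1 = (j - 1) + 1 by omega, List.drop_succ_cons]
  refine ⟨h1, by simp; omega, i' + 1, by omega, by omega, ?_⟩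
  rw [key i' hi1, key i (by omega), hfrag]

lemma isPrevFactor_sub {X : List α} {i L g e : ℕ} (h : IsPrevFactor X i L)
    (hig : i ≤ g) (hge : g < e) (he : e ≤ i + L) :
    IsPrevFactor X g (e - g) := by
  obtain ⟨h1, h2, i', hi1, hi2, hfrag⟩ := h
  refine ⟨by omega, by omega, i' + (g - i), by omega, by omega, ?_⟩
  have := frag_sub hi1 (show 1 ≤ i by omega) hfrag (show (g - i) + (e - g) ≤ L by omega)
  rwa [show i + (g - i) = g by omega] at this

-- ## prefix dominance

lemma lzCount_take_le_aux (X : List α) (m : ℕ) (hm : m ≤ X.length) :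
    ∀ fuel i g, X.length + 1 ≤ fuel + i → i ≤ g →
      lzCount (X.take m) g ≤ lzCountAux X fuel i := by
  have hlen : (X.take m).length = m := by rw [List.length_take]; omega
  intro fuel
  induction fuel with
  | zero =>
    intro i g hfi hig
    rw [lzCount_eq, hlen, if_pos (by omega)]
    exact Nat.zero_le _
  | succ fuel ih =>
    intro i g hfi hig
    show lzCount (X.take m) g ≤ if X.length < i then 0 else 1 + lzCountAux X fuel (i + lzNext X i)
    by_cases hxi : X.length < i
    · rw [if_pos hxi, lzCount_eq, hlen, if_pos (by omega)]
    · rw [if_neg hxi]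
      set nX := lzNext X i with hnX
      have hnX1 : 1 ≤ nX := one_le_lzNext X i
      by_cases hg : i + nX ≤ g
      · have := ih (i + nX) g (by omega) hg
        omega
      · by_cases hgm : m < g
        · rw [lzCount_eq, hlen, if_pos hgm]; omega
        · -- i ≤ g < i + nX, g ≤ m
          set e := min (i + nX) (m + 1) with he
          have hge : g < e := by omega
          have hnP : e - g ≤ lzNext (X.take m) g := by
            rcases lzNext_spec X i with hone | hprev
            · -- nX = 1, so e - g = 1
              have : e - g = 1 := by omega
              rw [this]; exact one_le_lzNext _ _
            · have hsub : IsPrevFactor X g (e - g) :=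
                isPrevFactor_sub hprev hig hge (by omega)
              exact le_lzNext (isPrevFactor_take hm hsub (by omega))
          have hrec : lzCount (X.take m) (g + lzNext (X.take m) g) ≤ lzCountAux X fuel (i + nX) := by
            by_cases hcase : i + nX ≤ m + 1
            · exact ih (i + nX) (g + lzNext (X.take m) g) (by omega) (by omega)
            · rw [lzCount_eq, hlen, if_pos (by omega)]
              exact Nat.zero_le _
          rw [lzCount_eq, hlen, if_neg (by omega)]
          omega

lemma lzSize_take_le (X : List α) (m : ℕ) : lzSize (X.take m) ≤ lzSize X := by
  by_cases hm : m ≤ X.length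
  · exact lzCount_take_le_aux X m hm (X.length + 1) 1 1 (by omega) le_rfl
  · rw [List.take_of_length_le (by omega)]

-- ## cons dominance

lemma lzCount_cons_le_aux (X : List α) (c : α) :
    ∀ fuel i g, X.length + 1 ≤ fuel + i → i + 1 ≤ g →
      lzCount (c :: X) g ≤ lzCountAux X fuel i := by
  have hlen : (c :: X).length = X.length + 1 := rfl
  intro fuel
  induction fuel with
  | zero =>
    intro i g hfi hig
    rw [lzCount_eq, hlen, if_pos (by omega)]
    exact Nat.zero_le _
  | succ fuel ih =>
    intro i g hfi hig
    show lzCount (c :: X) g ≤ if X.length < i then 0 else 1 + lzCountAux X fuel (i + lzNext X i)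
    by_cases hxi : X.length < i
    · rw [if_pos hxi, lzCount_eq, hlen, if_pos (by omega)]
    · rw [if_neg hxi]
      set nX := lzNext X i with hnX
      have hnX1 : 1 ≤ nX := one_le_lzNext X i
      by_cases hg : i + nX + 1 ≤ g
      · have := ih (i + nX) g (by omega) hg
        omega
      · -- i + 1 ≤ g ≤ i + nX
        have hxbound : i + nX ≤ X.length + 1 := add_lzNext_le (by omega)
        have hnC : (i + nX + 1) - g ≤ lzNext (c :: X) g := by
          rcases lzNext_spec X i with hone | hprev
          · have : i + nX + 1 - g = 1 := by omega
            rw [this]; exact one_le_lzNext _ _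
          · have hcons : IsPrevFactor (c :: X) (i + 1) nX := isPrevFactor_cons hprev
            have hsub : IsPrevFactor (c :: X) g (i + nX + 1 - g) :=
              isPrevFactor_sub hcons hig (by omega) (by omega)
            exact le_lzNext hsub
        have hrec : lzCount (c :: X) (g + lzNext (c :: X) g) ≤ lzCountAux X fuel (i + nX) :=
          ih (i + nX) (g + lzNext (c :: X) g) (by omega) (by omega)
        rw [lzCount_eq, hlen, if_neg (by omega)]
        omega

lemma lzSize_cons_le (X : List α) (c : α) : lzSize (c :: X) ≤ 1 + lzSize X := by
  have h0 : lzSize (c :: X) = lzCount (c :: X) 1 := rfl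
  rw [h0, lzCount_eq]
  rw [if_neg (by simp)]
  have := lzCount_cons_le_aux X c (X.length + 1) 1 (1 + lzNext (c :: X) 1)
    (by omega) (by have := one_le_lzNext (c :: X) 1; omega)
  exact Nat.add_le_add_left this 1

-- ## maxRevLZ interface

lemma maxRevLZ_le_iff (W : List α) (k : ℕ) :
    maxRevLZ W ≤ k ↔ ∀ a n, lzSize (((W.drop a).take n).reverse) ≤ k := by
  have hbdd : BddAbove {z | ∃ l n, z = lzSize (((W.drop l).take n).reverse)} := by
    refine ⟨W.length + 1, fun z hz => ?_⟩
    obtain ⟨a, n, rfl⟩ := hz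
    refine le_trans (lzSize_le _) ?_
    simp only [List.length_reverse, List.length_take, List.length_drop]
    omega
  have hne : {z | ∃ l n, z = lzSize (((W.drop l).take n).reverse)}.Nonempty :=
    ⟨_, 0, 0, rfl⟩
  unfold maxRevLZ
  rw [csSup_le_iff hbdd hne]
  constructor
  · intro H a n; exact H _ ⟨a, n, rfl⟩
  · rintro H z ⟨a, n, rfl⟩; exact H a n


/-- If the non-empty fragment `S[ℓ..r)` satisfies
`maxRevLZ(S[ℓ..r)) ≤ k` (`k > 0`, `r ≤ |S|`), then:
(a) `maxRevLZ(S[ℓ..r]) ≤ k ↔ |LZ(reverse(S[ℓ..r]))| ≤ k`;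
(b) `maxRevLZ(S[ℓ+1..r)) ≤ k`; and
(c) `maxRevLZ(S[ℓ..r]) ≤ k + 1`. -/
theorem maxRevLZ_extension (S : List α) (k : ℕ) (hk : 0 < k) (l r : ℕ)
    (hl : 1 ≤ l) (hlr : l < r) (hr : r ≤ S.length)
    (h : maxRevLZ (frag S l (r - l)) ≤ k) :
    (maxRevLZ (frag S l (r - l + 1)) ≤ k ↔ lzSize (frag S l (r - l + 1)).reverse ≤ k) ∧
    maxRevLZ (frag S (l + 1) (r - l - 1)) ≤ k ∧
    maxRevLZ (frag S l (r - l + 1)) ≤ k + 1 := by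
  set D := S.drop (l - 1) with hD
  have hDlen : D.length = S.length - (l - 1) := List.length_drop
  have hW : frag S l (r - l) = D.take (r - l) := rfl
  have hWp : frag S l (r - l + 1) = D.take (r - l + 1) := rfl
  have hWlen : (D.take (r - l)).length = r - l := by rw [List.length_take]; omega
  have hWplen : (D.take (r - l + 1)).length = r - l + 1 := by rw [List.length_take]; omega
  -- the last character
  obtain ⟨c, hc⟩ : ∃ c, D.take (r - l + 1) = D.take (r - l) ++ [c] := by
    have h1 : r - l < D.length := by omega
    refine ⟨D[r - l], ?_⟩
    rw [List.take_succ, List.getElem?_eq_getElem h1]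
    rfl
  -- fragments of W have small reverse-LZ size
  have hfragW : ∀ a n, lzSize (((D.take (r - l)).drop a).take n).reverse ≤ k :=
    (maxRevLZ_le_iff _ _).mp (hW ▸ h)
  have hWrev : lzSize (D.take (r - l)).reverse ≤ k := by
    have := hfragW 0 (r - l)
    rwa [List.drop_zero, List.take_of_length_le (le_of_eq hWlen)] at this
  -- the extended fragment has reverse-LZ size ≤ k + 1
  have hWprev : lzSize (D.take (r - l + 1)).reverse ≤ 1 + k := by
    rw [hc, List.reverse_append, List.reverse_singleton, List.singleton_append]
    exact le_trans (lzSize_cons_le _ _) (by omega)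
  -- dichotomy for fragments of Wp
  have hcases : ∀ a n, ((D.take (r - l + 1)).drop a).take n = ((D.take (r - l)).drop a).take n
      ∨ ((D.take (r - l + 1)).drop a).take n = (D.take (r - l + 1)).drop a := by
    intro a n
    by_cases hcase : a + n ≤ r - l
    · left
      rw [hc, List.drop_append_of_le_length (by omega),
        List.take_append_of_le_length (by rw [List.length_drop]; omega)]
    · right
      apply List.take_of_length_le
      rw [List.length_drop]; omega
  -- every fragment of Wp has reverse-LZ size ≤ max k (lzSize Wp.reverse)
  have hmain : ∀ a n, lzSize (((D.take (r - l + 1)).drop a).take n).reverse ≤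
      max k (lzSize (D.take (r - l + 1)).reverse) := by
    intro a n
    rcases hcases a n with heq | heq
    · rw [heq]; exact le_max_of_le_left (hfragW a n)
    · rw [heq, List.reverse_drop]
      exact le_max_of_le_right (lzSize_take_le _ _)
  refine ⟨⟨?_, ?_⟩, ?_, ?_⟩
  · -- (a) forward
    intro ha
    have := (maxRevLZ_le_iff _ _).mp ha 0 (r - l + 1)
    rwa [hWp, List.drop_zero, List.take_of_length_le (le_of_eq hWplen)] at this
  · -- (a) backward
    intro ha
    rw [hWp, maxRevLZ_le_iff]
    intro a n
    refine le_trans (hmain a n) (max_le le_rfl ?_)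
    rwa [hWp] at ha
  · -- (b)
    have hb : frag S (l + 1) (r - l - 1) = (D.take (r - l)).drop 1 := by
      unfold frag
      rw [List.drop_take, hD, List.drop_drop]
      congr 2 <;> omega
    rw [hb, maxRevLZ_le_iff]
    intro a n
    rw [List.drop_drop]
    exact hfragW (1 + a) n
  · -- (c)
    rw [hWp, maxRevLZ_le_iff]
    intro a n
    refine le_trans (hmain a n) (max_le (by omega) (by omega))
end
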